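/- arXiv:math/0611854 — 8 statements merged into one kernel-verified Lean document; each statement's English description precedes it below -/
import Mathlib

section
/- The integral over the real line of the complex-valued function s ↦ Log(1+is)/(1+s^2) equals π·log 2; that is, ∫_{-∞}^{∞} Log(1+is)/(1+s^2) ds = π·log 2 (a real number). -/
open MeasureTheory Real Complex

namespace LogSinAux

open Set

lemma neg_log_le_rpow {x : ℝ} (hx : 0 < x) : -Real.log x ≤ 2 * x ^ (-(1/2) : ℝ) := by
  have h1 : Real.log (x ^ (-(1/2) : ℝ)) ≤ x ^ (-(1/2) : ℝ) - 1 :=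
    Real.log_le_sub_one_of_pos (Real.rpow_pos_of_pos hx _)
  rw [Real.log_rpow hx] at h1
  nlinarith [Real.rpow_pos_of_pos hx (-(1/2) : ℝ)]

lemma integrable_aux : IntegrableOn (fun x : ℝ => Real.log 4 + 2 * x ^ (-(1/2) : ℝ))
    (Ioc (0:ℝ) 1) := by
  have h := (intervalIntegral.intervalIntegrable_rpow' (a := 0) (b := 1) (r := (-(1/2) : ℝ))
    (by norm_num))
  rw [intervalIntegrable_iff_integrableOn_Ioc_of_le zero_le_one] at h
  exact (integrable_const _).add (h.const_mul 2)

lemma intervalIntegrable_log_sin_01 :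
    IntervalIntegrable (fun x => Real.log (Real.sin x)) volume 0 1 := by
  rw [intervalIntegrable_iff_integrableOn_Ioc_of_le zero_le_one]
  refine integrable_aux.mono' ((Real.measurable_log.comp Real.measurable_sin).aestronglyMeasurable) ?_
  rw [ae_restrict_iff' measurableSet_Ioc]
  filter_upwards with x hx
  obtain ⟨h0, h1⟩ := hx
  have hsin0 : 0 < Real.sin x := Real.sin_pos_of_pos_of_lt_pi h0 (by nlinarith [Real.pi_gt_three])
  have hsin1 : Real.sin x ≤ 1 := Real.sin_le_one x
  have hx3 : x ^ 3 ≤ x := by nlinarith [sq_nonneg x, mul_pos h0 h0]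
  have hlow : x / 4 ≤ Real.sin x := by nlinarith [Real.sin_gt_sub_cube h0]
  have hlog : -Real.log (Real.sin x) ≤ Real.log 4 - Real.log x := by
    have h2 := Real.log_le_log (by positivity) hlow
    rw [Real.log_div (ne_of_gt h0) (by norm_num)] at h2
    linarith
  have habs : ‖Real.log (Real.sin x)‖ = -Real.log (Real.sin x) := by
    rw [Real.norm_eq_abs, abs_of_nonpos (Real.log_nonpos hsin0.le hsin1)]
  rw [habs]
  have hxr := neg_log_le_rpow h0
  linarith

lemma intervalIntegrable_log_sin :
    IntervalIntegrable (fun x => Real.log (Real.sin x)) volume 0 (π/2) := by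
  refine intervalIntegrable_log_sin_01.trans ?_
  apply ContinuousOn.intervalIntegrable
  apply Real.continuousOn_log.comp Real.continuous_sin.continuousOn
  intro x hx
  rw [uIcc_of_le (by nlinarith [Real.pi_gt_three])] at hx
  have : 0 < Real.sin x :=
    Real.sin_pos_of_pos_of_lt_pi (lt_of_lt_of_le one_pos hx.1)
      (lt_of_le_of_lt hx.2 (by nlinarith [Real.pi_gt_three]))
  simp [this.ne']

lemma intervalIntegrable_log_cos :
    IntervalIntegrable (fun x => Real.log (Real.cos x)) volume 0 (π/2) := by
  have h := intervalIntegrable_log_sin.comp_sub_left (π/2)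
  simp only [Real.sin_pi_div_two_sub, sub_self, sub_zero] at h
  exact h.symm

lemma integral_log_cos_eq : ∫ x in (0:ℝ)..(π/2), Real.log (Real.cos x)
    = ∫ x in (0:ℝ)..(π/2), Real.log (Real.sin x) := by
  have h := intervalIntegral.integral_comp_sub_left (a := 0) (b := π/2)
    (fun x => Real.log (Real.sin x)) (π/2)
  simp only [Real.sin_pi_div_two_sub, sub_self, sub_zero] at h
  exact h

lemma integral_log_sin_half : ∫ x in (π/2:ℝ)..π, Real.log (Real.sin x)
    = ∫ x in (0:ℝ)..(π/2), Real.log (Real.sin x) := by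
  have h := intervalIntegral.integral_comp_sub_left (a := 0) (b := π/2)
    (fun x => Real.log (Real.sin x)) π
  simp only [Real.sin_pi_sub] at h
  rw [show π - π/2 = π/2 by ring, sub_zero] at h
  exact h.symm

lemma intervalIntegrable_log_sin' :
    IntervalIntegrable (fun x => Real.log (Real.sin x)) volume (π/2) π := by
  have h := intervalIntegrable_log_sin.comp_sub_left π
  simp only [Real.sin_pi_sub, sub_zero] at h
  rw [show π - π/2 = π/2 by ring] at h
  exact h.symm

lemma integral_log_sin_pi : ∫ x in (0:ℝ)..π, Real.log (Real.sin x)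
    = 2 * ∫ x in (0:ℝ)..(π/2), Real.log (Real.sin x) := by
  rw [← intervalIntegral.integral_add_adjacent_intervals intervalIntegrable_log_sin
    intervalIntegrable_log_sin', integral_log_sin_half]
  ring

lemma integral_log_sin_value :
    ∫ x in (0:ℝ)..(π/2), Real.log (Real.sin x) = -(π/2) * Real.log 2 := by
  set J := ∫ x in (0:ℝ)..(π/2), Real.log (Real.sin x) with hJ
  have hdup : ∫ x in (0:ℝ)..(π/2), Real.log (Real.sin (2*x)) = J := by
    have h := intervalIntegral.integral_comp_mul_left (a := 0) (b := π/2)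
      (fun x => Real.log (Real.sin x)) (c := 2) two_ne_zero
    rw [mul_zero, show (2:ℝ) * (π/2) = π by ring] at h
    rw [h, integral_log_sin_pi, smul_eq_mul]
    ring
  have hsum : ∫ x in (0:ℝ)..(π/2), Real.log (Real.sin (2*x))
      = ∫ x in (0:ℝ)..(π/2), (Real.log 2 + (Real.log (Real.sin x) + Real.log (Real.cos x))) := by
    apply intervalIntegral.integral_congr_ae
    have hne : ∀ᵐ x : ℝ ∂volume, x ≠ π/2 := by
      refine ae_iff.mpr ?_
      simpa using measure_singleton (π/2 : ℝ)
    filter_upwards [hne] with x hx hmem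
    rw [uIoc_of_le (by positivity)] at hmem
    have h0 : 0 < x := hmem.1
    have h2 : x < π/2 := lt_of_le_of_ne hmem.2 hx
    have hs : 0 < Real.sin x := Real.sin_pos_of_pos_of_lt_pi h0 (by linarith [Real.pi_pos])
    have hc : 0 < Real.cos x := Real.cos_pos_of_mem_Ioo ⟨by linarith [Real.pi_pos], h2⟩
    rw [Real.sin_two_mul, Real.log_mul (mul_ne_zero two_ne_zero hs.ne') hc.ne',
      Real.log_mul two_ne_zero hs.ne']
    ring
  have hint : ∫ x in (0:ℝ)..(π/2), (Real.log 2 + (Real.log (Real.sin x) + Real.log (Real.cos x)))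
      = (π/2) * Real.log 2 + (J + J) := by
    rw [intervalIntegral.integral_add (intervalIntegrable_const)
      (intervalIntegrable_log_sin.add intervalIntegrable_log_cos),
      intervalIntegral.integral_add intervalIntegrable_log_sin intervalIntegrable_log_cos,
      intervalIntegral.integral_const, integral_log_cos_eq]
    simp only [sub_zero, smul_eq_mul]
    rfl
  have h0 : J = (π/2) * Real.log 2 + (J + J) := hdup.symm.trans (hsum.trans hint)
  linarith

lemma integral_log_cos_value : ∫ x in (0:ℝ)..(π/2), Real.log (Real.cos x) = -(π/2) * Real.log 2 :=
  integral_log_cos_eq.trans integral_log_sin_value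

lemma intervalIntegrable_log_cos_neg :
    IntervalIntegrable (fun x => Real.log (Real.cos x)) volume (-(π/2)) 0 := by
  have h := ((IntervalIntegrable.iff_comp_neg (by simp)).mp intervalIntegrable_log_cos)
  simp only [Real.cos_neg, neg_zero] at h
  exact h.symm

lemma integral_log_cos_neg : ∫ x in (-(π/2):ℝ)..0, Real.log (Real.cos x)
    = ∫ x in (0:ℝ)..(π/2), Real.log (Real.cos x) := by
  have h := intervalIntegral.integral_comp_neg (a := 0) (b := π/2)
    (fun x => Real.log (Real.cos x))
  simp only [Real.cos_neg, neg_zero] at h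
  exact h.symm

lemma integral_Ioo_log_cos : ∫ x in Ioo (-(π/2)) (π/2), Real.log (Real.cos x)
    = -π * Real.log 2 := by
  rw [← integral_Ioc_eq_integral_Ioo,
    ← intervalIntegral.integral_of_le (by linarith [Real.pi_pos] : -(π/2) ≤ π/2),
    ← intervalIntegral.integral_add_adjacent_intervals intervalIntegrable_log_cos_neg
      intervalIntegrable_log_cos, integral_log_cos_neg, integral_log_cos_value]
  ring

lemma hasDeriv_tan : ∀ x ∈ Ioo (-(π/2)) (π/2),
    HasDerivWithinAt Real.tan (1 / Real.cos x ^ 2) (Ioo (-(π/2)) (π/2)) x :=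
  fun x hx => (Real.hasDerivAt_tan (Real.cos_pos_of_mem_Ioo hx).ne').hasDerivWithinAt

lemma abs_deriv_smul_eq : ∀ x ∈ Ioo (-(π/2)) (π/2),
    |1 / Real.cos x ^ 2| • (Real.log (1 + Real.tan x ^ 2) / (1 + Real.tan x ^ 2))
      = (-2) * Real.log (Real.cos x) := by
  intro x hx
  have hc : 0 < Real.cos x := Real.cos_pos_of_mem_Ioo hx
  have h1 : (1 + Real.tan x ^ 2) = (Real.cos x ^ 2)⁻¹ := by
    rw [← Real.inv_one_add_tan_sq hc.ne', inv_inv]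
  have hc2 : (0:ℝ) < Real.cos x ^ 2 := by positivity
  rw [smul_eq_mul, h1, _root_.abs_of_pos (by positivity), Real.log_inv, div_inv_eq_mul]
  have hl := Real.log_pow (n := 2) (x := Real.cos x)
  push_cast at hl
  rw [hl]
  field_simp

lemma integral_log_one_add_sq :
    ∫ s : ℝ, Real.log (1 + s ^ 2) / (1 + s ^ 2) = 2 * π * Real.log 2 := by
  have h := integral_image_eq_integral_abs_deriv_smul measurableSet_Ioo hasDeriv_tan
    Real.injOn_tan (fun s => Real.log (1 + s ^ 2) / (1 + s ^ 2))
  rw [Real.image_tan_Ioo, setIntegral_univ] at h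
  rw [h, setIntegral_congr_fun measurableSet_Ioo abs_deriv_smul_eq, MeasureTheory.integral_const_mul,
    integral_Ioo_log_cos]
  ring

lemma integrable_log_div : Integrable (fun s : ℝ => Real.log (1 + s ^ 2) / (1 + s ^ 2)) := by
  have base := integrable_rpow_neg_one_add_norm_sq (E := ℝ) (μ := volume) (r := 3/2)
    (by simp; norm_num)
  refine (base.const_mul 4).mono'
    ((Real.measurable_log.comp (by fun_prop)).div (by fun_prop)).aestronglyMeasurable
    (Filter.Eventually.of_forall fun s => ?_)
  have hpos : (0:ℝ) < 1 + s ^ 2 := by positivity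
  have hns : ‖s‖ ^ 2 = s ^ 2 := by rw [Real.norm_eq_abs, _root_.sq_abs]
  have hlogle : Real.log (1 + s ^ 2) ≤ 4 * (1 + s ^ 2) ^ ((1:ℝ)/4) := by
    have h1 : Real.log ((1 + s ^ 2) ^ ((1:ℝ)/4)) ≤ (1 + s ^ 2) ^ ((1:ℝ)/4) - 1 :=
      Real.log_le_sub_one_of_pos (Real.rpow_pos_of_pos hpos _)
    rw [Real.log_rpow hpos] at h1
    nlinarith [Real.rpow_pos_of_pos hpos ((1:ℝ)/4)]
  have hlognn : 0 ≤ Real.log (1 + s ^ 2) := Real.log_nonneg (by nlinarith)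
  rw [Real.norm_eq_abs, _root_.abs_of_nonneg (by positivity), hns]
  have hkey : (1 + s ^ 2) ^ ((1:ℝ)/4) / (1 + s ^ 2) = (1 + s ^ 2) ^ (-(3/2:ℝ)/2) := by
    rw [show (-(3/2:ℝ)/2) = (1:ℝ)/4 - 1 by norm_num, Real.rpow_sub hpos, Real.rpow_one]
  calc Real.log (1 + s ^ 2) / (1 + s ^ 2) ≤ 4 * (1 + s ^ 2) ^ ((1:ℝ)/4) / (1 + s ^ 2) := by
        gcongr
    _ = 4 * ((1 + s ^ 2) ^ (-(3/2:ℝ)/2)) := by rw [mul_div_assoc, hkey]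

lemma integrable_arctan_div : Integrable (fun s : ℝ => Real.arctan s / (1 + s ^ 2)) := by
  refine (integrable_inv_one_add_sq.const_mul (π/2)).mono'
    ((Real.measurable_arctan.div (by fun_prop)).aestronglyMeasurable)
    (Filter.Eventually.of_forall fun s => ?_)
  have hpos : (0:ℝ) < 1 + s ^ 2 := by positivity
  have habs : |Real.arctan s| ≤ π/2 :=
    _root_.abs_le.mpr ⟨(Real.neg_pi_div_two_lt_arctan s).le, (Real.arctan_lt_pi_div_two s).le⟩
  rw [Real.norm_eq_abs, _root_.abs_div, _root_.abs_of_pos hpos, div_eq_mul_inv]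
  gcongr
  
lemma integral_arctan_div : ∫ s : ℝ, Real.arctan s / (1 + s ^ 2) = 0 := by
  have hodd : ∀ s : ℝ, Real.arctan (-s) / (1 + (-s) ^ 2) = -(Real.arctan s / (1 + s ^ 2)) := by
    intro s; rw [Real.arctan_neg]; ring_nf
  have h := integral_neg_eq_self (fun s : ℝ => Real.arctan s / (1 + s ^ 2)) volume
  simp only [hodd] at h
  rw [integral_neg] at h
  linarith

lemma key_decomp (s : ℝ) :
    Complex.log (1 + Complex.I * (s : ℂ)) / (1 + (s : ℂ) ^ 2) =
      ((Real.log (1 + s ^ 2) / (1 + s ^ 2) / 2 : ℝ) : ℂ)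
        + Complex.I * ((Real.arctan s / (1 + s ^ 2) : ℝ) : ℂ) := by
  have hpos : (0:ℝ) < 1 + s ^ 2 := by positivity
  have habs : ‖(1 + Complex.I * (s : ℂ))‖ = Real.sqrt (1 + s ^ 2) := by
    rw [Complex.norm_def]
    congr 1
    simp [Complex.normSq_apply]
    ring
  have hlog : Complex.log (1 + Complex.I * (s : ℂ))
      = ((Real.log (1 + s ^ 2) / 2 : ℝ) : ℂ) + ((Real.arctan s : ℝ) : ℂ) * Complex.I := by
    apply Complex.ext
    · rw [Complex.log_re, habs, Real.log_sqrt hpos.le]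
      simp only [Complex.add_re, Complex.ofReal_re, Complex.mul_re, Complex.I_re, Complex.I_im,
        Complex.ofReal_im, zero_mul, one_mul, mul_zero, mul_one, sub_zero, zero_sub, add_zero]
    · rw [Complex.log_im]
      have harg : Complex.arg (1 + Complex.I * (s : ℂ)) = Real.arctan s := by
        rw [Complex.arg_of_re_nonneg (by simp)]
        rw [habs]
        simp only [Complex.add_im, Complex.one_im, Complex.mul_im, Complex.I_re, Complex.I_im,
          Complex.ofReal_re, Complex.ofReal_im, one_mul, zero_mul, zero_add, mul_zero]
        rw [Real.arctan_eq_arcsin]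
      rw [harg]
      simp only [Complex.add_im, Complex.ofReal_im, Complex.mul_im, Complex.I_im, Complex.I_re,
        Complex.ofReal_re, mul_zero, mul_one, zero_add, add_zero]
  have hden : (1 + (s : ℂ) ^ 2) = ((1 + s ^ 2 : ℝ) : ℂ) := by push_cast; ring
  have hne : ((1 + s ^ 2 : ℝ) : ℂ) ≠ 0 := Complex.ofReal_ne_zero.mpr hpos.ne'
  rw [hlog, hden,
    show Real.log (1 + s ^ 2) / (1 + s ^ 2) / 2 = (Real.log (1 + s ^ 2) / 2) / (1 + s ^ 2) by ring,
    Complex.ofReal_div, Complex.ofReal_div (Real.arctan s), add_div]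
  push_cast
  ring

end LogSinAux

open LogSinAux in
/-- Key step in the proof of Lemma A.4:
`∫_{-∞}^{∞} Log(1+is)/(1+s²) ds = π log 2`, where `Log` is the principal
branch of the complex logarithm. -/
theorem integral_complex_log_one_add_I_mul_div_one_add_sq :
    ∫ s : ℝ, Complex.log (1 + Complex.I * (s : ℂ)) / (1 + (s : ℂ) ^ 2) =
      ((Real.pi * Real.log 2 : ℝ) : ℂ) := by
  have hint1 : Integrable (fun s : ℝ => ((Real.log (1 + s ^ 2) / (1 + s ^ 2) / 2 : ℝ) : ℂ)) :=
    (integrable_log_div.div_const 2).ofReal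
  have hint2 : Integrable (fun s : ℝ => ((Real.arctan s / (1 + s ^ 2) : ℝ) : ℂ)) :=
    integrable_arctan_div.ofReal
  simp only [key_decomp]
  rw [integral_add hint1 (hint2.const_mul Complex.I), MeasureTheory.integral_const_mul]
  have h1 : ∫ s : ℝ, ((Real.log (1 + s ^ 2) / (1 + s ^ 2) / 2 : ℝ) : ℂ)
      = ((∫ s : ℝ, Real.log (1 + s ^ 2) / (1 + s ^ 2) / 2 : ℝ) : ℂ) := integral_ofReal
  have h2 : ∫ s : ℝ, ((Real.arctan s / (1 + s ^ 2) : ℝ) : ℂ)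
      = ((∫ s : ℝ, Real.arctan s / (1 + s ^ 2) : ℝ) : ℂ) := integral_ofReal
  rw [h1, h2, integral_arctan_div]
  have h3 : ∫ s : ℝ, Real.log (1 + s ^ 2) / (1 + s ^ 2) / 2 = π * Real.log 2 := by
    rw [integral_div, integral_log_one_add_sq]
    ring
  rw [h3]
  simp
end

section
/- For every real a > 0, ∫_{1}^{∞} 1/( r·√(r^2+a^2)·(√(r^2+a^2)+r) ) dr = a^{-2}·( log(√(1+a^2)+1) − log 2 ). -/
open MeasureTheory Real Filter

/-- Formula (A.4) of Lemma A.3: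
`∫_1^∞ dr/(r·√(r²+a²)·(√(r²+a²)+r)) = a⁻²(log(√(1+a²)+1) − log 2)` for `a > 0`. -/
theorem integral_A4 (a : ℝ) (ha : 0 < a) :
    ∫ r in Set.Ioi (1 : ℝ),
        1 / (r * Real.sqrt (r ^ 2 + a ^ 2) * (Real.sqrt (r ^ 2 + a ^ 2) + r)) =
      a ^ (-2 : ℤ) * (Real.log (Real.sqrt (1 + a ^ 2) + 1) - Real.log 2) := by
  have ha2 : (0:ℝ) < a ^ 2 := by positivity
  set F : ℝ → ℝ :=
    fun r => a ^ (-2:ℤ) * (Real.log r - Real.log (Real.sqrt (r^2 + a^2) + r)) with hFdef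
  have hza : (a:ℝ) ^ (-2:ℤ) = (a^2)⁻¹ := by
    rw [zpow_neg]; norm_cast
  have key : ∀ x ∈ Set.Ici (1:ℝ), HasDerivAt F
      (1 / (x * Real.sqrt (x ^ 2 + a ^ 2) * (Real.sqrt (x ^ 2 + a ^ 2) + x))) x := by
    intro x hx
    have hx0 : (0:ℝ) < x := lt_of_lt_of_le one_pos hx
    have hs0 : (0:ℝ) < x^2 + a^2 := by positivity
    have hsq : Real.sqrt (x^2+a^2) ^ 2 = x^2 + a^2 := Real.sq_sqrt hs0.le
    have hspos : 0 < Real.sqrt (x^2+a^2) := Real.sqrt_pos.mpr hs0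
    have h1 : HasDerivAt (fun r : ℝ => r^2 + a^2) (2*x) x := by
      simpa using (hasDerivAt_pow 2 x).add_const (a^2)
    have h2 : HasDerivAt (fun r : ℝ => Real.sqrt (r^2 + a^2))
        (x / Real.sqrt (x^2+a^2)) x := by
      have : HasDerivAt (fun r : ℝ => Real.sqrt (r^2 + a^2)) _ x :=
        (Real.hasDerivAt_sqrt hs0.ne').comp x h1
      convert this using 1
      field_simp
    have h3 : HasDerivAt (fun r : ℝ => Real.sqrt (r^2+a^2) + r)
        (x / Real.sqrt (x^2+a^2) + 1) x := h2.add (hasDerivAt_id x)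
    have h4 : HasDerivAt (fun r : ℝ => Real.log (Real.sqrt (r^2+a^2) + r))
        ((x / Real.sqrt (x^2+a^2) + 1) / (Real.sqrt (x^2+a^2) + x)) x :=
      h3.log (by positivity)
    have h5 : HasDerivAt Real.log (1/x) x := by
      simpa using Real.hasDerivAt_log hx0.ne'
    have h6 : HasDerivAt F _ x := (h5.sub h4).const_mul (a ^ (-2:ℤ))
    convert h6 using 1
    set s := Real.sqrt (x^2+a^2) with hs
    have hsx : (0:ℝ) < s + x := by positivity
    have e1 : (x / s + 1) / (s + x) = 1 / s := by
      rw [div_eq_div_iff hsx.ne' hspos.ne']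
      field_simp
      ring
    have hxlt : x < s := by nlinarith [hspos, hsq]
    have hax : a^2 = (s - x) * (s + x) := by nlinarith [hsq]
    have hd : 0 < s - x := sub_pos.mpr hxlt
    rw [hza, e1, hax]
    field_simp
  have pos : ∀ x ∈ Set.Ioi (1:ℝ),
      0 ≤ 1 / (x * Real.sqrt (x ^ 2 + a ^ 2) * (Real.sqrt (x ^ 2 + a ^ 2) + x)) := by
    intro x hx
    have hx0 : (0:ℝ) < x := lt_trans one_pos hx
    have hs0 : (0:ℝ) < x^2 + a^2 := by positivity
    have hspos : 0 < Real.sqrt (x^2+a^2) := Real.sqrt_pos.mpr hs0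
    positivity
  have t0 : Tendsto (fun r : ℝ => a^2/r^2) atTop (nhds 0) :=
    Tendsto.div_atTop tendsto_const_nhds (tendsto_pow_atTop two_ne_zero)
  have t1 : Tendsto (fun r : ℝ => Real.sqrt (1 + a^2/r^2) + 1) atTop (nhds 2) := by
    have h1 : Tendsto (fun r : ℝ => 1 + a^2/r^2) atTop (nhds 1) := by
      simpa using tendsto_const_nhds.add t0
    have h2 := (Real.continuous_sqrt.tendsto 1).comp h1
    have h3 := h2.add (tendsto_const_nhds (x := (1:ℝ)))
    simp only [Real.sqrt_one, Function.comp] at h3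
    convert h3 using 2
    norm_num
  have t2 : Tendsto (fun r : ℝ => Real.sqrt (r^2+a^2)/r + 1) atTop (nhds 2) := by
    apply t1.congr'
    filter_upwards [eventually_gt_atTop (0:ℝ)] with r hr
    have h : (1:ℝ) + a^2/r^2 = (r^2+a^2)/r^2 := by field_simp
    rw [h, Real.sqrt_div (by positivity) (r^2), Real.sqrt_sq hr.le]
  have tend : Tendsto F atTop (nhds (a ^ (-2:ℤ) * (- Real.log 2))) := by
    have hlog : Tendsto (fun r : ℝ =>
        a ^ (-2:ℤ) * (- Real.log (Real.sqrt (r^2+a^2)/r + 1))) atTop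
        (nhds (a ^ (-2:ℤ) * (- Real.log 2))) :=
      (((Real.continuousAt_log (by norm_num)).tendsto.comp t2).neg).const_mul _
    apply hlog.congr'
    filter_upwards [eventually_gt_atTop (0:ℝ)] with r hr
    have hs0 : (0:ℝ) < r^2 + a^2 := by positivity
    have hspos : 0 < Real.sqrt (r^2+a^2) := Real.sqrt_pos.mpr hs0
    have h : Real.sqrt (r^2+a^2)/r + 1 = (Real.sqrt (r^2+a^2) + r)/r := by
      field_simp
    rw [h, Real.log_div (by positivity) hr.ne']
    simp only [hFdef]
    ring
  have hint := integral_Ioi_of_hasDerivAt_of_nonneg' key pos tend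
  rw [hint]
  simp only [hFdef]
  rw [Real.log_one]
  norm_num
  ring
end

section
/- For every real a > 0 and every integer j ≥ 1, ∫_{1}^{∞} (√(r^2+a^2)−r)^{j−1} / ( √(r^2+a^2)·(√(r^2+a^2)+r)^{j+1} ) dr = (2j)^{-1}·a^{-2}·(√(1+a^{-2}) − a^{-1})^{2j}. -/
open MeasureTheory Real

/-- Formula (A.5) of Lemma A.3: for `a > 0` and `j ≥ 1`,
`∫_1^∞ (√(r²+a²)−r)^(j−1)/(√(r²+a²)·(√(r²+a²)+r)^(j+1)) dr
  = (2j)⁻¹ a⁻² (√(1+a⁻²) − a⁻¹)^(2j)`. -/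
theorem integral_A5 (a : ℝ) (ha : 0 < a) (j : ℕ) (hj : 1 ≤ j) :
    ∫ r in Set.Ioi (1 : ℝ),
        (Real.sqrt (r ^ 2 + a ^ 2) - r) ^ (j - 1) /
          (Real.sqrt (r ^ 2 + a ^ 2) * (Real.sqrt (r ^ 2 + a ^ 2) + r) ^ (j + 1)) =
      (2 * (j : ℝ))⁻¹ * a ^ (-2 : ℤ) * (Real.sqrt (1 + a⁻¹ ^ 2) - a⁻¹) ^ (2 * j) := by
  obtain ⟨k, rfl⟩ : ∃ k, j = k + 1 := ⟨j - 1, (Nat.succ_pred_eq_of_pos hj).symm⟩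
  set s : ℝ → ℝ := fun x => Real.sqrt (x ^ 2 + a ^ 2) with hs
  set F : ℝ → ℝ := fun x => -(2 * ((k:ℝ)+1) * a ^ 2)⁻¹ * ((s x - x) / (s x + x)) ^ (k+1) with hF
  have hSpos : ∀ x : ℝ, 0 < s x := fun x => Real.sqrt_pos.mpr (by positivity)
  have hS2 : ∀ x : ℝ, s x ^ 2 = x ^ 2 + a ^ 2 := fun x => Real.sq_sqrt (by positivity)
  have hSx : ∀ x : ℝ, 0 < x → x < s x := by
    intro x hx
    nlinarith [hS2 x, hSpos x]
  have hk1 : ((k:ℝ) + 1) ≠ 0 := by positivity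
  have hderiv : ∀ x : ℝ, 0 < x → HasDerivAt F
      ((s x - x) ^ k / (s x * (s x + x) ^ (k + 1 + 1))) x := by
    intro x hx
    have hSp := hSpos x
    have hSxp := hSx x hx
    have hne : x ^ 2 + a ^ 2 ≠ 0 := by positivity
    have h1 : HasDerivAt (fun x : ℝ => x ^ 2 + a ^ 2) (2 * x) x := by
      simpa using (hasDerivAt_pow 2 x).add_const (a ^ 2)
    have hs' : HasDerivAt s (x / s x) x := by
      have h2 := (Real.hasDerivAt_sqrt hne).comp x h1
      refine h2.congr_deriv ?_
      field_simp
      ring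
    have hden : s x + x ≠ 0 := by positivity
    have hu : HasDerivAt (fun x => (s x - x) / (s x + x))
        (-2 * a ^ 2 / (s x * (s x + x) ^ 2)) x := by
      have h3 := ((hs'.sub (hasDerivAt_id x)).div (hs'.add (hasDerivAt_id x)) hden)
      refine h3.congr_deriv ?_
      have h2 := hS2 x
      simp only [Pi.add_apply, Pi.sub_apply, id_eq]
      field_simp
      linear_combination (-2) * h2
    have h4 := ((hu.pow (k+1)).const_mul (-(2 * ((k:ℝ)+1) * a ^ 2)⁻¹))
    refine h4.congr_deriv ?_
    simp only [Nat.add_sub_cancel, div_pow]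
    field_simp
    push_cast
    ring
  have hcont : ContinuousWithinAt F (Set.Ici 1) 1 :=
    (hderiv 1 one_pos).continuousAt.continuousWithinAt
  have hnonneg : ∀ x ∈ Set.Ioi (1:ℝ), 0 ≤ (s x - x) ^ k / (s x * (s x + x) ^ (k + 1 + 1)) := by
    intro x hx
    have hx0 : (0:ℝ) < x := lt_trans one_pos hx
    have h1 := hSx x hx0
    have h2 := hSpos x
    apply div_nonneg (pow_nonneg (by linarith) k)
    positivity
  have ha2 : ∀ x : ℝ, (s x - x) * (s x + x) = a ^ 2 := by
    intro x
    nlinarith [hS2 x]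
  have hueq : ∀ x : ℝ, 0 < x → (s x - x) / (s x + x) = a ^ 2 / (s x + x) ^ 2 := by
    intro x hx
    have h1 := hSpos x
    have hden : s x + x ≠ 0 := by positivity
    rw [div_eq_div_iff hden (by positivity)]
    nlinarith [ha2 x]
  have htu : Filter.Tendsto (fun x => (s x - x) / (s x + x)) Filter.atTop (nhds 0) := by
    have hg : Filter.Tendsto (fun x : ℝ => a ^ 2 / x ^ 2) Filter.atTop (nhds 0) := by
      have hpow : Filter.Tendsto (fun x : ℝ => x ^ 2) Filter.atTop Filter.atTop :=
        Filter.tendsto_pow_atTop two_ne_zero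
      have h6 := hpow.inv_tendsto_atTop.const_mul (a ^ 2)
      rw [mul_zero] at h6
      simpa [div_eq_mul_inv, Pi.inv_def] using h6
    apply squeeze_zero' ?_ ?_ hg
    · filter_upwards [Filter.eventually_gt_atTop 0] with x hx
      have h1 := (hSx x hx).le
      have h2 := hSpos x
      exact div_nonneg (by linarith) (by positivity)
    · filter_upwards [Filter.eventually_gt_atTop 0] with x hx
      rw [hueq x hx]
      have h1 := (hSx x hx).le
      have h2 := hSpos x
      apply div_le_div_of_nonneg_left (by positivity) (by positivity)
      nlinarith
  have htF : Filter.Tendsto F Filter.atTop (nhds 0) := by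
    have h5 := (htu.pow (k+1)).const_mul (-(2 * ((k:ℝ)+1) * a ^ 2)⁻¹)
    have h0 : -(2 * ((k:ℝ)+1) * a ^ 2)⁻¹ * (0:ℝ) ^ (k+1) = 0 := by simp
    rw [h0] at h5
    exact h5
  have key := integral_Ioi_of_hasDerivAt_of_nonneg hcont
      (fun x hx => hderiv x (lt_trans one_pos hx)) hnonneg htF
  have key2 : (∫ r in Set.Ioi (1 : ℝ),
        (Real.sqrt (r ^ 2 + a ^ 2) - r) ^ (k + 1 - 1) /
          (Real.sqrt (r ^ 2 + a ^ 2) * (Real.sqrt (r ^ 2 + a ^ 2) + r) ^ (k + 1 + 1))) = 0 - F 1 := key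
  rw [key2]
  -- Now algebra
  have hs1 : s 1 = Real.sqrt (1 + a ^ 2) := by simp [hs]
  have hS1pos := hSpos 1
  have hS1gt := hSx 1 one_pos
  have hsqrt : Real.sqrt (1 + a⁻¹ ^ 2) = s 1 / a := by
    rw [show (1 + a⁻¹ ^ 2) = (s 1 / a) ^ 2 by
      rw [div_pow, hS2 1]
      field_simp
      ring]
    exact Real.sqrt_sq (by positivity)
  have hsq : (Real.sqrt (1 + a⁻¹ ^ 2) - a⁻¹) ^ 2 = (s 1 - 1) / (s 1 + 1) := by
    rw [hsqrt]
    have hden : s 1 + 1 ≠ 0 := by positivity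
    have h := ha2 1
    field_simp
    nlinarith [ha2 1]
  rw [pow_mul, hsq]
  simp only [hF]
  rw [zpow_neg, zpow_two]
  push_cast
  rw [zero_sub, neg_mul, neg_neg, ← sq, ← inv_pow, inv_pow, ← mul_inv]
end

section
/- Let r > 0 and κ > 0 be real numbers and let l, m be natural numbers with l > m. Then (1/(2π))·∫_{ℝ} (r−it)^l·(r+it)^m / ( (r+it)^{l+1}·(r−it)^{m+1}·(κ+it) ) dt = 0, and (1/(2π))·∫_{ℝ} (r−it)^l·(r+it)^m / ( (r+it)^{l+1}·(r−it)^{m+1}·(κ−it) ) dt = (r−κ)^{l−m−1} / (r+κ)^{l−m+1}. -/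
open MeasureTheory Real Complex Filter Topology

section LaguerreAux

variable {r κ : ℝ}

private lemma norm_sq_add (r t : ℝ) : ‖(r:ℂ) + Complex.I * t‖^2 = r^2 + t^2 := by
  rw [Complex.sq_norm, Complex.normSq_apply]
  simp; ring

private lemma norm_sub_eq (r t : ℝ) : ‖(r:ℂ) - Complex.I * t‖ = ‖(r:ℂ) + Complex.I * t‖ := by
  have : (r:ℂ) - Complex.I * t = (starRingEnd ℂ) ((r:ℂ) + Complex.I * t) := by
    simp [map_add, map_mul, Complex.conj_I]; ring
  rw [this, RCLike.norm_conj]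

private lemma le_norm_add (hr : 0 < r) (t : ℝ) : r ≤ ‖(r:ℂ) + Complex.I * t‖ := by
  have := Complex.abs_re_le_norm ((r:ℂ) + Complex.I * t)
  simp at this
  simpa [abs_of_pos hr] using this

private lemma abs_le_norm_add (r t : ℝ) : |t| ≤ ‖(r:ℂ) + Complex.I * t‖ := by
  have := Complex.abs_im_le_norm ((r:ℂ) + Complex.I * t)
  simpa using this

private lemma norm_add_pos (hr : 0 < r) (t : ℝ) : 0 < ‖(r:ℂ) + Complex.I * t‖ :=
  lt_of_lt_of_le hr (le_norm_add hr t)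

private lemma ne_zero_add (hr : 0 < r) (t : ℝ) : (r:ℂ) + Complex.I * t ≠ 0 := by
  intro h; simpa [h] using norm_add_pos hr t

private lemma ne_zero_sub (hr : 0 < r) (t : ℝ) : (r:ℂ) - Complex.I * t ≠ 0 := by
  intro h
  have := norm_sub_eq r t
  rw [h, norm_zero] at this
  exact absurd this.symm (ne_of_gt (norm_add_pos hr t))

private lemma integrable_shape (hr : 0 < r) (hκ : 0 < κ) (n p : ℕ) (hp : n + 2 ≤ p) (D : ℝ → ℂ)
    (hD : Continuous D) (hDlb : ∀ t, κ ≤ ‖D t‖) :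
    Integrable fun t : ℝ =>
      ((r:ℂ) - Complex.I * t) ^ n / (((r:ℂ) + Complex.I * t) ^ p * D t) := by
  obtain ⟨q, rfl⟩ := Nat.exists_eq_add_of_le hp
  have hDne : ∀ t, D t ≠ 0 := fun t h => by
    have := hDlb t; rw [h, norm_zero] at this; linarith
  have hcont : Continuous fun t : ℝ =>
      ((r:ℂ) - Complex.I * t) ^ n / (((r:ℂ) + Complex.I * t) ^ (n+2+q) * D t) := by
    apply Continuous.div
    · fun_prop
    · fun_prop
    · intro t
      exact mul_ne_zero (pow_ne_zero _ (ne_zero_add hr t)) (hDne t)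
  set C : ℝ := ((min 1 (r^2)) * r^q * κ)⁻¹ with hC
  have hmin : 0 < min 1 (r^2) := lt_min one_pos (by positivity)
  apply Integrable.mono' ((integrable_inv_one_add_sq).const_mul C)
    hcont.aestronglyMeasurable
  filter_upwards with t
  set R : ℝ := ‖(r:ℂ) + Complex.I * t‖ with hRdef
  have hR : 0 < R := norm_add_pos hr t
  have hrR : r ≤ R := le_norm_add hr t
  have hR2 : R^2 = r^2 + t^2 := norm_sq_add r t
  have h1 : ‖((r:ℂ) - Complex.I * t) ^ n / (((r:ℂ) + Complex.I * t) ^ (n+2+q) * D t)‖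
      = (R^2 * R^q * ‖D t‖)⁻¹ := by
    rw [norm_div, norm_pow, norm_mul, norm_pow, _root_.norm_sub_eq]
    rw [pow_add, pow_add, ← hRdef]
    have hDt : (0:ℝ) < ‖D t‖ := lt_of_lt_of_le hκ (hDlb t)
    have e : R^n*R^2*R^q*‖D t‖ = R^n * (R^2*R^q*‖D t‖) := by ring
    rw [e, div_mul_eq_div_div, div_self (ne_of_gt (pow_pos hR n)), one_div]
  rw [h1]
  have h2 : (min 1 (r^2) * (1+t^2)) * r^q * κ ≤ R^2 * R^q * ‖D t‖ := by
    have e1 : min 1 (r^2) * (1+t^2) ≤ R^2 := by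
      rw [hR2]
      nlinarith [min_le_left 1 (r^2), min_le_right 1 (r^2), sq_nonneg t, hmin.le]
    gcongr <;>
      first
        | positivity
        | exact e1
        | exact pow_le_pow_left hr.le hrR q
        | exact hDlb t
  calc (R^2 * R^q * ‖D t‖)⁻¹ ≤ ((min 1 (r^2) * (1+t^2)) * r^q * κ)⁻¹ := by
        apply inv_anti₀ (by positivity) h2
    _ = C * (1+t^2)⁻¹ := by rw [hC]; field_simp

private lemma integrable_one_div_prod (hr : 0 < r) (hκ : 0 < κ) (D : ℝ → ℂ) (hD : Continuous D)
    (hD1 : ∀ t, κ ≤ ‖D t‖) (hD2 : ∀ t, |t| ≤ ‖D t‖) :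
    Integrable fun t : ℝ => (((r:ℂ) + Complex.I * t) * D t)⁻¹ := by
  have hDne : ∀ t, D t ≠ 0 := fun t h => by
    have := hD1 t; rw [h, norm_zero] at this; linarith
  have hcont : Continuous fun t : ℝ => (((r:ℂ) + Complex.I * t) * D t)⁻¹ := by
    apply Continuous.inv₀
    · fun_prop
    · intro t; exact mul_ne_zero (ne_zero_add hr t) (hDne t)
  have hmin : 0 < min (r*κ) 1 := lt_min (by positivity) one_pos
  set C : ℝ := 2 * (min (r*κ) 1)⁻¹ with hC
  apply Integrable.mono' ((integrable_inv_one_add_sq).const_mul C) hcont.aestronglyMeasurable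
  filter_upwards with t
  set R : ℝ := ‖(r:ℂ) + Complex.I * t‖ with hRdef
  have hR : 0 < R := norm_add_pos hr t
  have hrR : r ≤ R := le_norm_add hr t
  have htR : |t| ≤ R := abs_le_norm_add r t
  have hDt : (0:ℝ) < ‖D t‖ := lt_of_lt_of_le hκ (hD1 t)
  rw [norm_inv, norm_mul, ← hRdef]
  have key : min (r*κ) 1 * (1 + t^2) ≤ 2 * (R * ‖D t‖) := by
    have h1 : r * κ ≤ R * ‖D t‖ := mul_le_mul hrR (hD1 t) hκ.le hR.le
    have h2 : t^2 ≤ R * ‖D t‖ := by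
      calc t^2 = |t| * |t| := by rw [← abs_mul, abs_mul_self t, sq]
        _ ≤ R * ‖D t‖ := mul_le_mul htR (hD2 t) (abs_nonneg t) hR.le
    nlinarith [min_le_left (r*κ) 1, min_le_right (r*κ) 1, hmin.le]
  calc (R * ‖D t‖)⁻¹ ≤ (min (r*κ) 1 * (1 + t^2) / 2)⁻¹ := by
        apply inv_anti₀ (by positivity)
        linarith
    _ = C * (1+t^2)⁻¹ := by
        rw [hC]
        field_simp
        try ring

private lemma hasDerivAt_affine (r : ℝ) (t : ℝ) :
    HasDerivAt (fun t : ℝ => (r:ℂ) + Complex.I * t) Complex.I t := by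
  have h : HasDerivAt (fun t : ℝ => ((t:ℝ):ℂ)) 1 t := by
    exact Complex.ofRealCLM.hasDerivAt (x := t)
  simpa using (h.const_mul Complex.I).const_add (r:ℂ)

private lemma hasDerivAt_comp_affine {f : ℂ → ℂ} {f' : ℂ} (t : ℝ)
    (hf : HasDerivAt f f' ((r:ℂ) + Complex.I * t)) :
    HasDerivAt (fun t : ℝ => f ((r:ℂ) + Complex.I * t)) (Complex.I * f') t := by
  have := HasDerivAt.scomp (𝕜 := ℝ) (𝕜' := ℂ) (x := t) hf (hasDerivAt_affine r t)
  simpa [Function.comp_def, smul_eq_mul, mul_comm] using this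

private lemma tendsto_const_mul_pow_inv (hr : 0 < r) (k : ℕ) (c : ℂ) (l : Filter ℝ)
    (hl : Tendsto (fun t : ℝ => |t|) l atTop) :
    Tendsto (fun t : ℝ => c * (((r:ℂ) + Complex.I * t) ^ (k+1))⁻¹) l (𝓝 0) := by
  apply squeeze_zero_norm' (a := fun t : ℝ => ‖c‖ * |t|⁻¹)
  · filter_upwards [hl.eventually_ge_atTop 1] with t ht
    have hR : |t| ≤ ‖(r:ℂ) + Complex.I * t‖ := abs_le_norm_add r t
    have h1 : |t| ≤ ‖(r:ℂ) + Complex.I * t‖ ^ (k+1) :=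
      le_trans hR (le_self_pow₀ (le_trans ht hR) (Nat.succ_ne_zero k))
    rw [norm_mul, norm_inv, norm_pow]
    have h2 : (‖(r:ℂ) + Complex.I * t‖ ^ (k+1))⁻¹ ≤ |t|⁻¹ :=
      inv_anti₀ (lt_of_lt_of_le one_pos ht) h1
    exact mul_le_mul_of_nonneg_left h2 (norm_nonneg c)
  · simpa using (tendsto_inv_atTop_zero.comp hl).const_mul ‖c‖

private lemma integrable_pow_inv (hr : 0 < r) (k : ℕ) :
    Integrable fun t : ℝ => (((r:ℂ) + Complex.I * t) ^ (k+2))⁻¹ := by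
  have h := integrable_shape hr one_pos 0 (k+2) (by omega) (fun _ => 1)
    continuous_const (by simp)
  simpa [one_div] using h

private lemma integral_pow_inv_eq_zero (hr : 0 < r) (k : ℕ) :
    ∫ t : ℝ, (((r:ℂ) + Complex.I * t) ^ (k+2))⁻¹ = 0 := by
  set F : ℝ → ℂ := fun t => (Complex.I / (k+1)) * (((r:ℂ) + Complex.I * t) ^ (k+1))⁻¹ with hF
  have hk : ((k:ℂ)+1) ≠ 0 := Nat.cast_add_one_ne_zero k
  have hderiv : ∀ t : ℝ, HasDerivAt F ((((r:ℂ) + Complex.I * t) ^ (k+2))⁻¹) t := by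
    intro t
    have hz := hasDerivAt_zpow (-(k+1) : ℤ) ((r:ℂ) + Complex.I * t) (Or.inl (ne_zero_add hr t))
    have h := (hasDerivAt_comp_affine t hz).const_mul (Complex.I / (k+1))
    have hfun : F = fun t : ℝ =>
        (Complex.I / (k+1)) * (((r:ℂ) + Complex.I * t) ^ (-(k+1) : ℤ)) := by
      funext t
      rw [hF]
      congr 1
    rw [hfun]
    convert h using 1
    · rfl
    have hne := ne_zero_add hr t
    have he : (-(k+1) : ℤ) - 1 = -((k:ℤ)+2) := by ring
    rw [he, zpow_neg]
    have h2 : ((r:ℂ) + Complex.I * t) ^ ((k:ℤ)+2) = ((r:ℂ) + Complex.I * t) ^ (k+2) := by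
      rw [show ((k:ℤ)+2) = ((k+2 : ℕ) : ℤ) by push_cast; ring, zpow_natCast]
    rw [h2]
    push_cast
    field_simp
    ring_nf
    simp [Complex.I_sq]
  have hbot := tendsto_const_mul_pow_inv hr k (Complex.I / (k+1)) atBot
    (by simpa using tendsto_abs_atBot_atTop)
  have htop := tendsto_const_mul_pow_inv hr k (Complex.I / (k+1)) atTop
    (by simpa using tendsto_abs_atTop_atTop)
  have h := integral_of_hasDerivAt_of_tendsto hderiv (integrable_pow_inv hr k) hbot htop
  simpa using h

private lemma norm_add_eq_sqrt (r t : ℝ) : ‖(r:ℂ) + Complex.I * t‖ = Real.sqrt (r^2 + t^2) := by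
  rw [← norm_sq_add r t, Real.sqrt_sq (norm_nonneg _)]

private lemma tendsto_ratio_top (hr : 0 < r) :
    Tendsto (fun t : ℝ => t / ‖(r:ℂ) + Complex.I * t‖) atTop (𝓝 1) := by
  have h1 : Tendsto (fun t : ℝ => ((r/t)^2 + 1)) atTop (𝓝 1) := by
    have : Tendsto (fun t : ℝ => r/t) atTop (𝓝 0) := tendsto_const_nhds.div_atTop tendsto_id
    simpa using ((this.pow 2).add tendsto_const_nhds)
  have h2 : Tendsto (fun t : ℝ => (Real.sqrt ((r/t)^2 + 1))⁻¹) atTop (𝓝 1) := by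
    have hs : Tendsto (fun t : ℝ => Real.sqrt ((r/t)^2 + 1)) atTop (𝓝 1) := by
      have := (Real.continuous_sqrt.tendsto 1).comp h1
      simpa [Function.comp_def] using this
    simpa using hs.inv₀ one_ne_zero
  apply h2.congr'
  filter_upwards [eventually_gt_atTop 0] with t ht
  rw [norm_add_eq_sqrt]
  have : Real.sqrt (r^2 + t^2) = t * Real.sqrt ((r/t)^2 + 1) := by
    rw [← Real.sqrt_sq ht.le, ← Real.sqrt_mul (sq_nonneg t)]
    congr 1
    field_simp
    exact Real.sq_sqrt (sq_nonneg t)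
  rw [this]
  rw [eq_comm, div_eq_iff (by positivity)]
  field_simp

private lemma tendsto_ratio_bot (hr : 0 < r) :
    Tendsto (fun t : ℝ => t / ‖(r:ℂ) + Complex.I * t‖) atBot (𝓝 (-1)) := by
  have h := ((tendsto_ratio_top hr).comp tendsto_neg_atBot_atTop).neg
  simp only [Function.comp] at h
  apply h.congr
  intro t
  have : ‖(r:ℂ) + Complex.I * (-t:ℝ)‖ = ‖(r:ℂ) + Complex.I * t‖ := by
    rw [norm_add_eq_sqrt, norm_add_eq_sqrt]
    norm_num
  rw [this]
  ring

private lemma tendsto_arg_top (hr : 0 < r) :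
    Tendsto (fun t : ℝ => Complex.arg ((r:ℂ) + Complex.I * t)) atTop (𝓝 (π/2)) := by
  have h := (Real.continuous_arcsin.tendsto 1).comp (tendsto_ratio_top hr)
  rw [Real.arcsin_one] at h
  apply h.congr
  intro t
  simp only [Function.comp]
  rw [Complex.arg_of_re_nonneg (by simp [hr.le])]
  congr 1
  simp

private lemma tendsto_arg_bot (hr : 0 < r) :
    Tendsto (fun t : ℝ => Complex.arg ((r:ℂ) + Complex.I * t)) atBot (𝓝 (-(π/2))) := by
  have h := (Real.continuous_arcsin.tendsto (-1)).comp (tendsto_ratio_bot hr)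
  rw [Real.arcsin_neg_one] at h
  apply h.congr
  intro t
  simp only [Function.comp]
  rw [Complex.arg_of_re_nonneg (by simp [hr.le])]
  congr 1
  simp

private lemma tendsto_arg_sub_top (hr : 0 < r) :
    Tendsto (fun t : ℝ => Complex.arg ((r:ℂ) - Complex.I * t)) atTop (𝓝 (-(π/2))) := by
  have h := (tendsto_arg_bot hr).comp tendsto_neg_atTop_atBot
  apply h.congr
  intro t
  simp only [Function.comp]
  norm_num
  ring_nf

private lemma tendsto_arg_sub_bot (hr : 0 < r) :
    Tendsto (fun t : ℝ => Complex.arg ((r:ℂ) - Complex.I * t)) atBot (𝓝 (π/2)) := by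
  have h := (tendsto_arg_top hr).comp tendsto_neg_atBot_atTop
  apply h.congr
  intro t
  simp only [Function.comp]
  norm_num
  ring_nf

private lemma tendsto_sq_atTop (l : Filter ℝ) (hl : Tendsto (fun t : ℝ => |t|) l atTop) :
    Tendsto (fun t : ℝ => κ^2 + t^2) l atTop := by
  apply tendsto_atTop_add_const_left
  apply tendsto_atTop_mono' l _ hl
  filter_upwards [hl.eventually_ge_atTop 1] with t ht
  calc |t| = |t| * 1 := (mul_one _).symm
    _ ≤ |t| * |t| := by nlinarith
    _ = t^2 := by rw [← abs_mul, abs_mul_self t, ← sq]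

private lemma tendsto_log_norm_sub (hr : 0 < r) (hκ : 0 < κ) (l : Filter ℝ)
    (hl : Tendsto (fun t : ℝ => |t|) l atTop) :
    Tendsto (fun t : ℝ => Real.log ‖(r:ℂ) + Complex.I * t‖ - Real.log ‖(κ:ℂ) + Complex.I * t‖)
      l (𝓝 0) := by
  have hrat : Tendsto (fun t : ℝ => (r^2+t^2)/(κ^2+t^2)) l (𝓝 1) := by
    have h0 : Tendsto (fun t : ℝ => (r^2-κ^2)/(κ^2+t^2)) l (𝓝 0) :=
      tendsto_const_nhds.div_atTop (tendsto_sq_atTop l hl)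
    have := h0.const_add (1:ℝ)
    rw [add_zero] at this
    apply this.congr'
    filter_upwards with t
    have h1 : (0:ℝ) < κ^2 + t^2 := by positivity
    field_simp
    ring
  have hlog : Tendsto (fun t : ℝ => Real.log ((r^2+t^2)/(κ^2+t^2))) l (𝓝 0) := by
    have := ((Real.continuousAt_log one_ne_zero).tendsto).comp hrat
    simpa [Function.comp_def] using this
  have := hlog.div_const 2
  rw [zero_div] at this
  apply this.congr
  intro t
  have h1 : (0:ℝ) < r^2 + t^2 := by positivity
  have h2 : (0:ℝ) < κ^2 + t^2 := by positivity
  rw [Real.log_div (ne_of_gt h1) (ne_of_gt h2), norm_add_eq_sqrt, norm_add_eq_sqrt,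
    Real.log_sqrt h1.le, Real.log_sqrt h2.le]
  ring

private lemma log_eq (z : ℂ) :
    Complex.log z = (Real.log ‖z‖ : ℂ) + Complex.arg z * Complex.I := rfl

private lemma tendsto_complex_comb {fre fim : ℝ → ℝ} {l : Filter ℝ} {a b : ℝ}
    (h1 : Tendsto fre l (𝓝 a)) (h2 : Tendsto fim l (𝓝 b)) :
    Tendsto (fun t => ((fre t : ℝ) : ℂ) + ((fim t : ℝ) : ℂ) * Complex.I) l
      (𝓝 ((a:ℂ) + (b:ℂ) * Complex.I)) :=
  ((Complex.continuous_ofReal.tendsto a).comp h1).add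
    (((Complex.continuous_ofReal.tendsto b).comp h2).mul_const Complex.I)

private lemma log_diff_eq (r : ℝ) (e : ℝ → ℂ) :
    (fun t : ℝ => Complex.log ((r:ℂ) + Complex.I * t) - Complex.log (e t)) =
    fun t : ℝ => ((Real.log ‖(r:ℂ) + Complex.I * t‖ - Real.log ‖e t‖ : ℝ) : ℂ) +
      ((Complex.arg ((r:ℂ) + Complex.I * t) - Complex.arg (e t) : ℝ) : ℂ) * Complex.I := by
  funext t
  rw [log_eq, log_eq]
  push_cast
  ring

private lemma tendsto_log_sub_sub_top (hr : 0 < r) (hκ : 0 < κ) :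
    Tendsto (fun t : ℝ => Complex.log ((r:ℂ) + Complex.I * t) -
      Complex.log ((κ:ℂ) - Complex.I * t)) atTop (𝓝 (π * Complex.I)) := by
  rw [log_diff_eq r (fun t => (κ:ℂ) - Complex.I * t)]
  have hre : Tendsto (fun t : ℝ => Real.log ‖(r:ℂ) + Complex.I * t‖ -
      Real.log ‖(κ:ℂ) - Complex.I * t‖) atTop (𝓝 0) := by
    simp only [_root_.norm_sub_eq]
    exact tendsto_log_norm_sub hr hκ atTop (by simpa using tendsto_abs_atTop_atTop)
  have him : Tendsto (fun t : ℝ => Complex.arg ((r:ℂ) + Complex.I * t) -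
      Complex.arg ((κ:ℂ) - Complex.I * t)) atTop (𝓝 π) := by
    have := (tendsto_arg_top hr).sub (tendsto_arg_sub_top hκ)
    simpa using this.congr (fun t => rfl)
  have := tendsto_complex_comb hre him
  simpa using this

private lemma tendsto_log_sub_sub_bot (hr : 0 < r) (hκ : 0 < κ) :
    Tendsto (fun t : ℝ => Complex.log ((r:ℂ) + Complex.I * t) -
      Complex.log ((κ:ℂ) - Complex.I * t)) atBot (𝓝 (-(π * Complex.I))) := by
  rw [log_diff_eq r (fun t => (κ:ℂ) - Complex.I * t)]
  have hre : Tendsto (fun t : ℝ => Real.log ‖(r:ℂ) + Complex.I * t‖ -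
      Real.log ‖(κ:ℂ) - Complex.I * t‖) atBot (𝓝 0) := by
    simp only [_root_.norm_sub_eq]
    exact tendsto_log_norm_sub hr hκ atBot (by simpa using tendsto_abs_atBot_atTop)
  have him : Tendsto (fun t : ℝ => Complex.arg ((r:ℂ) + Complex.I * t) -
      Complex.arg ((κ:ℂ) - Complex.I * t)) atBot (𝓝 (-π)) := by
    have := (tendsto_arg_bot hr).sub (tendsto_arg_sub_bot hκ)
    have h2 : -(π/2) - π/2 = -π := by ring
    rw [h2] at this
    exact this
  have := tendsto_complex_comb hre him
  simpa using this

private lemma tendsto_log_sub_plus (hr : 0 < r) (hκ : 0 < κ) (l : Filter ℝ)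
    (hl : Tendsto (fun t : ℝ => |t|) l atTop)
    (ha : Tendsto (fun t : ℝ => Complex.arg ((r:ℂ) + Complex.I * t) -
      Complex.arg ((κ:ℂ) + Complex.I * t)) l (𝓝 0)) :
    Tendsto (fun t : ℝ => Complex.log ((r:ℂ) + Complex.I * t) -
      Complex.log ((κ:ℂ) + Complex.I * t)) l (𝓝 0) := by
  rw [log_diff_eq r (fun t => (κ:ℂ) + Complex.I * t)]
  have hre := tendsto_log_norm_sub hr hκ l hl
  have := tendsto_complex_comb hre ha
  simpa using this

private lemma hasDerivAt_log_affine (hr : 0 < r) (t : ℝ) :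
    HasDerivAt (fun t : ℝ => Complex.log ((r:ℂ) + Complex.I * t))
      (Complex.I * ((r:ℂ) + Complex.I * t)⁻¹) t := by
  apply hasDerivAt_comp_affine t
  apply Complex.hasDerivAt_log
  rw [Complex.mem_slitPlane_iff]
  left; simpa using hr

private lemma hasDerivAt_log_affine_sub (hκ : 0 < κ) (t : ℝ) :
    HasDerivAt (fun t : ℝ => Complex.log ((κ:ℂ) - Complex.I * t))
      (-Complex.I * ((κ:ℂ) - Complex.I * t)⁻¹) t := by
  have hf : HasDerivAt Complex.log (((κ:ℂ) - Complex.I * t)⁻¹) ((κ:ℂ) - Complex.I * t) := by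
    apply Complex.hasDerivAt_log
    rw [Complex.mem_slitPlane_iff]
    left; simpa using hκ
  have h : HasDerivAt (fun t : ℝ => (κ:ℂ) - Complex.I * t) (-Complex.I) t := by
    have hh : HasDerivAt (fun t : ℝ => ((t:ℝ):ℂ)) 1 t := by
      exact Complex.ofRealCLM.hasDerivAt (x := t)
    simpa [sub_eq_add_neg] using ((hh.const_mul Complex.I).neg.const_add (κ:ℂ)).congr_deriv (g' := -Complex.I) (by ring)
  have := HasDerivAt.scomp (𝕜 := ℝ) (𝕜' := ℂ) (x := t) hf h
  simpa [Function.comp_def, smul_eq_mul, mul_comm] using this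

private lemma integral_base_sub (hr : 0 < r) (hκ : 0 < κ) :
    ∫ t : ℝ, (((r:ℂ) + Complex.I * t) * ((κ:ℂ) - Complex.I * t))⁻¹
      = ((2*π/(r+κ) : ℝ) : ℂ) := by
  set c : ℂ := (((r+κ:ℝ):ℂ) * Complex.I)⁻¹ with hc
  set F : ℝ → ℂ := fun t => c * (Complex.log ((r:ℂ) + Complex.I * t) -
    Complex.log ((κ:ℂ) - Complex.I * t)) with hF
  have hrκ : ((r:ℂ) + (κ:ℂ)) ≠ 0 := by
    rw [← Complex.ofReal_add]
    exact_mod_cast ne_of_gt (by positivity : (0:ℝ) < r + κ)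
  have hderiv : ∀ t : ℝ, HasDerivAt F
      ((((r:ℂ) + Complex.I * t) * ((κ:ℂ) - Complex.I * t))⁻¹) t := by
    intro t
    have h := ((hasDerivAt_log_affine hr t).sub (hasDerivAt_log_affine_sub hκ t)).const_mul c
    convert h using 1
    · rfl
    · rfl
    have h1 := ne_zero_add hr t
    have h2 := ne_zero_sub hκ t
    rw [hc]
    push_cast
    field_simp
    ring
  have hint : Integrable fun t : ℝ =>
      (((r:ℂ) + Complex.I * t) * ((κ:ℂ) - Complex.I * t))⁻¹ := by
    apply integrable_one_div_prod hr hκ _ (by fun_prop)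
    · intro t
      rw [_root_.norm_sub_eq]
      exact le_norm_add hκ t
    · intro t
      rw [_root_.norm_sub_eq]
      exact abs_le_norm_add κ t
  have hbot : Tendsto F atBot (𝓝 (c * (-(π * Complex.I)))) :=
    (tendsto_log_sub_sub_bot hr hκ).const_mul c
  have htop : Tendsto F atTop (𝓝 (c * (π * Complex.I))) :=
    (tendsto_log_sub_sub_top hr hκ).const_mul c
  rw [integral_of_hasDerivAt_of_tendsto hderiv hint hbot htop]
  rw [hc]
  have hI : Complex.I ≠ 0 := Complex.I_ne_zero
  push_cast
  field_simp
  ring_nf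

private lemma integral_base_plus (hr : 0 < r) (hκ : 0 < κ) (hne : r ≠ κ) :
    ∫ t : ℝ, (((r:ℂ) + Complex.I * t) * ((κ:ℂ) + Complex.I * t))⁻¹ = 0 := by
  set c : ℂ := (((κ-r:ℝ):ℂ) * Complex.I)⁻¹ with hc
  set F : ℝ → ℂ := fun t => c * (Complex.log ((r:ℂ) + Complex.I * t) -
    Complex.log ((κ:ℂ) + Complex.I * t)) with hF
  have hκr : ((κ:ℂ) - (r:ℂ)) ≠ 0 := by
    rw [← Complex.ofReal_sub]
    exact_mod_cast sub_ne_zero.mpr (Ne.symm hne)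
  have hderiv : ∀ t : ℝ, HasDerivAt F
      ((((r:ℂ) + Complex.I * t) * ((κ:ℂ) + Complex.I * t))⁻¹) t := by
    intro t
    have h := ((hasDerivAt_log_affine hr t).sub (hasDerivAt_log_affine hκ t)).const_mul c
    convert h using 1
    · rfl
    · rfl
    have h1 := ne_zero_add hr t
    have h2 := ne_zero_add hκ t
    rw [hc]
    push_cast
    field_simp
    ring
  have hint : Integrable fun t : ℝ =>
      (((r:ℂ) + Complex.I * t) * ((κ:ℂ) + Complex.I * t))⁻¹ := by
    apply integrable_one_div_prod hr hκ _ (by fun_prop)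
    · intro t; exact le_norm_add hκ t
    · intro t; exact abs_le_norm_add κ t
  have hzero : ∀ l : Filter ℝ, Tendsto (fun t : ℝ => |t|) l atTop →
      Tendsto (fun t : ℝ => Complex.arg ((r:ℂ) + Complex.I * t) -
        Complex.arg ((κ:ℂ) + Complex.I * t)) l (𝓝 0) → Tendsto F l (𝓝 0) := by
    intro l hl ha
    have := (tendsto_log_sub_plus hr hκ l hl ha).const_mul c
    simpa using this
  have hbot : Tendsto F atBot (𝓝 0) := by
    apply hzero atBot (by simpa using tendsto_abs_atBot_atTop)
    have := (tendsto_arg_bot hr).sub (tendsto_arg_bot hκ)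
    simpa using this
  have htop : Tendsto F atTop (𝓝 0) := by
    apply hzero atTop (by simpa using tendsto_abs_atTop_atTop)
    have := (tendsto_arg_top hr).sub (tendsto_arg_top hκ)
    simpa using this
  rw [integral_of_hasDerivAt_of_tendsto hderiv hint hbot htop]
  simp

private lemma integrable_g_minus (hr : 0 < r) (hκ : 0 < κ) (n p : ℕ) (hp : n + 2 ≤ p) :
    Integrable fun t : ℝ =>
      ((r:ℂ) - Complex.I * t) ^ n /
        (((r:ℂ) + Complex.I * t) ^ p * ((κ:ℂ) - Complex.I * t)) :=
  integrable_shape hr hκ n p hp _ (by fun_prop)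
    (fun t => by rw [_root_.norm_sub_eq]; exact le_norm_add hκ t)

private lemma integrable_g_plus (hr : 0 < r) (hκ : 0 < κ) (n p : ℕ) (hp : n + 2 ≤ p) :
    Integrable fun t : ℝ =>
      ((r:ℂ) - Complex.I * t) ^ n /
        (((r:ℂ) + Complex.I * t) ^ p * ((κ:ℂ) + Complex.I * t)) :=
  integrable_shape hr hκ n p hp _ (by fun_prop) (fun t => le_norm_add hκ t)

private lemma integrable_pow_prod_minus (hr : 0 < r) (hκ : 0 < κ) (n : ℕ) :
    Integrable fun t : ℝ =>
      (((r:ℂ) + Complex.I * t) ^ (n+1) * ((κ:ℂ) - Complex.I * t))⁻¹ := by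
  cases n with
  | zero =>
    have := integrable_one_div_prod hr hκ (fun t => (κ:ℂ) - Complex.I * t) (by fun_prop)
      (fun t => by rw [_root_.norm_sub_eq]; exact le_norm_add hκ t)
      (fun t => by rw [_root_.norm_sub_eq]; exact abs_le_norm_add κ t)
    simpa [pow_one] using this
  | succ q =>
    have := integrable_g_minus hr hκ 0 (q+2) (by omega)
    simpa [one_div] using this

private lemma integrable_pow_prod_plus (hr : 0 < r) (hκ : 0 < κ) (n : ℕ) :
    Integrable fun t : ℝ =>
      (((r:ℂ) + Complex.I * t) ^ (n+1) * ((κ:ℂ) + Complex.I * t))⁻¹ := by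
  cases n with
  | zero =>
    have := integrable_one_div_prod hr hκ (fun t => (κ:ℂ) + Complex.I * t) (by fun_prop)
      (fun t => le_norm_add hκ t) (fun t => abs_le_norm_add κ t)
    simpa [pow_one] using this
  | succ q =>
    have := integrable_g_plus hr hκ 0 (q+2) (by omega)
    simpa [one_div] using this

private lemma inv_split_key (Y X B c : ℂ) (hY : Y ≠ 0) (hX : X ≠ 0) (hB : B ≠ 0)
    (hc : c ≠ 0) (hcs : c = X + B) :
    (Y * X * B)⁻¹ = c⁻¹ * ((Y * X)⁻¹ + (Y * B)⁻¹) := by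
  subst hcs
  field_simp
  ring

private lemma inv_split_key' (Y X B c : ℂ) (hY : Y ≠ 0) (hX : X ≠ 0) (hB : B ≠ 0)
    (hc : c ≠ 0) (hcs : c = B - X) :
    (Y * X * B)⁻¹ = c⁻¹ * ((Y * X)⁻¹ - (Y * B)⁻¹) := by
  subst hcs
  field_simp

private lemma div_split_key (N A X B W c : ℂ) (hX : X ≠ 0) (hB : B ≠ 0) (hW : W ≠ 0)
    (hcs : c = A + X) :
    (N * A) / (W * X * B) = c * (N / (W * X * B)) - N / (W * B) := by
  subst hcs
  field_simp
  ring

private lemma integral_pminus (hr : 0 < r) (hκ : 0 < κ) (n : ℕ) :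
    ∫ t : ℝ, (((r:ℂ) + Complex.I * t) ^ (n+1) * ((κ:ℂ) - Complex.I * t))⁻¹
      = ((2*π/(r+κ)^(n+1) : ℝ) : ℂ) := by
  induction n with
  | zero => simpa [pow_one] using integral_base_sub hr hκ
  | succ n ih =>
    simp only [show n+1+1 = n+2 from rfl]
    have hrκ : (r + κ : ℝ) ≠ 0 := by positivity
    have hid : (fun t : ℝ => (((r:ℂ) + Complex.I * t) ^ (n+2) * ((κ:ℂ) - Complex.I * t))⁻¹)
        = fun t : ℝ => (((r+κ:ℝ):ℂ))⁻¹ * ((((r:ℂ) + Complex.I * t) ^ (n+2))⁻¹ +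
            (((r:ℂ) + Complex.I * t) ^ (n+1) * ((κ:ℂ) - Complex.I * t))⁻¹) := by
      funext t
      have h1 := ne_zero_add hr t
      have h2 := ne_zero_sub hκ t
      have h3 : (((r+κ:ℝ)):ℂ) ≠ 0 := Complex.ofReal_ne_zero.mpr hrκ
      rw [pow_succ ((r:ℂ) + Complex.I * t) (n+1)]
      exact inv_split_key _ _ _ _ (pow_ne_zero _ h1) h1 h2 h3 (by push_cast; ring)
    rw [hid, integral_const_mul,
      integral_add (integrable_pow_inv hr n) (integrable_pow_prod_minus hr hκ n),
      integral_pow_inv_eq_zero hr n, ih, zero_add]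
    rw [← Complex.ofReal_inv, ← Complex.ofReal_mul]
    congr 1
    field_simp
    ring

private lemma integral_pplus (hr : 0 < r) (hκ : 0 < κ) (n : ℕ) :
    ∫ t : ℝ, (((r:ℂ) + Complex.I * t) ^ (n+1) * ((κ:ℂ) + Complex.I * t))⁻¹ = 0 := by
  rcases eq_or_ne r κ with heq | hne
  · subst heq
    have hid : (fun t : ℝ => (((r:ℂ) + Complex.I * t) ^ (n+1) * ((r:ℂ) + Complex.I * t))⁻¹)
        = fun t : ℝ => (((r:ℂ) + Complex.I * t) ^ (n+2))⁻¹ := by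
      funext t
      rw [← pow_succ]
    rw [hid]
    exact integral_pow_inv_eq_zero hr n
  · induction n with
    | zero => simpa [pow_one] using integral_base_plus hr hκ hne
    | succ n ih =>
      simp only [show n+1+1 = n+2 from rfl]
      have hκr : (κ - r : ℝ) ≠ 0 := sub_ne_zero.mpr (Ne.symm hne)
      have hid : (fun t : ℝ => (((r:ℂ) + Complex.I * t) ^ (n+2) * ((κ:ℂ) + Complex.I * t))⁻¹)
          = fun t : ℝ => (((κ-r:ℝ):ℂ))⁻¹ * ((((r:ℂ) + Complex.I * t) ^ (n+2))⁻¹ -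
              (((r:ℂ) + Complex.I * t) ^ (n+1) * ((κ:ℂ) + Complex.I * t))⁻¹) := by
        funext t
        have h1 := ne_zero_add hr t
        have h2 := ne_zero_add hκ t
        have h3 : (((κ-r:ℝ)):ℂ) ≠ 0 := Complex.ofReal_ne_zero.mpr hκr
        rw [pow_succ ((r:ℂ) + Complex.I * t) (n+1)]
        exact inv_split_key' _ _ _ _ (pow_ne_zero _ h1) h1 h2 h3 (by push_cast; ring)
      rw [hid, integral_const_mul,
        integral_sub (integrable_pow_inv hr n) (integrable_pow_prod_plus hr hκ n),
        integral_pow_inv_eq_zero hr n, ih, sub_zero, mul_zero]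

private lemma integral_gminus (hr : 0 < r) (hκ : 0 < κ) (n : ℕ) : ∀ p : ℕ, n + 2 ≤ p →
    ∫ t : ℝ, ((r:ℂ) - Complex.I * t) ^ n /
        (((r:ℂ) + Complex.I * t) ^ p * ((κ:ℂ) - Complex.I * t))
      = ((2*π*(r-κ)^n/(r+κ)^p : ℝ) : ℂ) := by
  induction n with
  | zero =>
    intro p hp
    obtain ⟨q, rfl⟩ : ∃ q, p = q+1 := ⟨p-1, by omega⟩
    simp only [pow_zero, one_div]
    rw [integral_pminus hr hκ q]
    norm_num
  | succ n ih =>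
    intro p hp
    obtain ⟨q, rfl⟩ : ∃ q, p = q+1 := ⟨p-1, by omega⟩
    have hq1 : n + 2 ≤ q + 1 := by omega
    have hq2 : n + 2 ≤ q := by omega
    have hrκ : (r + κ : ℝ) ≠ 0 := by positivity
    have hid : (fun t : ℝ => ((r:ℂ) - Complex.I * t) ^ (n+1) /
          (((r:ℂ) + Complex.I * t) ^ (q+1) * ((κ:ℂ) - Complex.I * t)))
        = fun t : ℝ => ((2*r:ℝ):ℂ) * (((r:ℂ) - Complex.I * t) ^ n /
            (((r:ℂ) + Complex.I * t) ^ (q+1) * ((κ:ℂ) - Complex.I * t))) -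
          ((r:ℂ) - Complex.I * t) ^ n /
            (((r:ℂ) + Complex.I * t) ^ q * ((κ:ℂ) - Complex.I * t)) := by
      funext t
      have h1 := ne_zero_add hr t
      have h2 := ne_zero_sub hκ t
      have h4 := pow_ne_zero q h1
      rw [pow_succ ((r:ℂ) - Complex.I * t) n, pow_succ ((r:ℂ) + Complex.I * t) q]
      exact div_split_key _ _ _ _ _ _ h1 h2 h4 (by push_cast; ring)
    rw [hid, integral_sub ((integrable_g_minus hr hκ n (q+1) hq1).const_mul _)
        (integrable_g_minus hr hκ n q hq2),
      integral_const_mul, ih (q+1) hq1, ih q hq2]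
    rw [← Complex.ofReal_mul, ← Complex.ofReal_sub]
    congr 1
    field_simp
    ring

private lemma integral_gplus (hr : 0 < r) (hκ : 0 < κ) (n : ℕ) : ∀ p : ℕ, n + 2 ≤ p →
    ∫ t : ℝ, ((r:ℂ) - Complex.I * t) ^ n /
        (((r:ℂ) + Complex.I * t) ^ p * ((κ:ℂ) + Complex.I * t)) = 0 := by
  induction n with
  | zero =>
    intro p hp
    obtain ⟨q, rfl⟩ : ∃ q, p = q+1 := ⟨p-1, by omega⟩
    simp only [pow_zero, one_div]
    exact integral_pplus hr hκ q
  | succ n ih =>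
    intro p hp
    obtain ⟨q, rfl⟩ : ∃ q, p = q+1 := ⟨p-1, by omega⟩
    have hq1 : n + 2 ≤ q + 1 := by omega
    have hq2 : n + 2 ≤ q := by omega
    have hid : (fun t : ℝ => ((r:ℂ) - Complex.I * t) ^ (n+1) /
          (((r:ℂ) + Complex.I * t) ^ (q+1) * ((κ:ℂ) + Complex.I * t)))
        = fun t : ℝ => ((2*r:ℝ):ℂ) * (((r:ℂ) - Complex.I * t) ^ n /
            (((r:ℂ) + Complex.I * t) ^ (q+1) * ((κ:ℂ) + Complex.I * t))) -
          ((r:ℂ) - Complex.I * t) ^ n /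
            (((r:ℂ) + Complex.I * t) ^ q * ((κ:ℂ) + Complex.I * t)) := by
      funext t
      have h1 := ne_zero_add hr t
      have h2 := ne_zero_add hκ t
      have h4 := pow_ne_zero q h1
      rw [pow_succ ((r:ℂ) - Complex.I * t) n, pow_succ ((r:ℂ) + Complex.I * t) q]
      exact div_split_key _ _ _ _ _ _ h1 h2 h4 (by push_cast; ring)
    rw [hid, integral_sub ((integrable_g_plus hr hκ n (q+1) hq1).const_mul _)
        (integrable_g_plus hr hκ n q hq2),
      integral_const_mul, ih (q+1) hq1, ih q hq2, mul_zero, sub_zero]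

end LaguerreAux

/-- Lemma A.1, case `l > m`: with `s^±_{l,m}` the displayed Laguerre integrals,
`s^+_{l,m} = 0` and `s^-_{l,m} = (r−κ)^{l−m−1}/(r+κ)^{l−m+1}`. -/
theorem laguerre_integral_l_gt_m (r κ : ℝ) (hr : 0 < r) (hκ : 0 < κ)
    (l m : ℕ) (hlm : m < l) :
    (1 / (2 * Real.pi) : ℂ) *
        ∫ t : ℝ, ((r : ℂ) - Complex.I * t) ^ l * ((r : ℂ) + Complex.I * t) ^ m /
          (((r : ℂ) + Complex.I * t) ^ (l + 1) * ((r : ℂ) - Complex.I * t) ^ (m + 1) *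
            ((κ : ℂ) + Complex.I * t)) = 0 ∧
    (1 / (2 * Real.pi) : ℂ) *
        ∫ t : ℝ, ((r : ℂ) - Complex.I * t) ^ l * ((r : ℂ) + Complex.I * t) ^ m /
          (((r : ℂ) + Complex.I * t) ^ (l + 1) * ((r : ℂ) - Complex.I * t) ^ (m + 1) *
            ((κ : ℂ) - Complex.I * t)) =
      (((r - κ) ^ (l - m - 1) / (r + κ) ^ (l - m + 1) : ℝ) : ℂ) := by
  obtain ⟨n, rfl⟩ : ∃ n, l = m + 1 + n := ⟨l - (m+1), by omega⟩
  have hred : ∀ D : ℝ → ℂ, (∀ t, D t ≠ 0) →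
      (fun t : ℝ => ((r : ℂ) - Complex.I * t) ^ (m+1+n) * ((r : ℂ) + Complex.I * t) ^ m /
          (((r : ℂ) + Complex.I * t) ^ (m+1+n + 1) * ((r : ℂ) - Complex.I * t) ^ (m + 1) *
            D t))
        = fun t : ℝ => ((r:ℂ) - Complex.I * t) ^ n /
            (((r:ℂ) + Complex.I * t) ^ (n+2) * D t) := by
    intro D hD
    funext t
    have h1 := ne_zero_add hr t
    have h2 := ne_zero_sub hr t
    have h3 := hD t
    rw [div_eq_div_iff
      (mul_ne_zero (mul_ne_zero (pow_ne_zero _ h1) (pow_ne_zero _ h2)) h3)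
      (mul_ne_zero (pow_ne_zero _ h1) h3)]
    ring
  have hπ : (π : ℝ) ≠ 0 := Real.pi_ne_zero
  have hrκ : (r + κ : ℝ) ≠ 0 := by positivity
  constructor
  · rw [hred _ (fun t => ne_zero_add hκ t), integral_gplus hr hκ n (n+2) le_rfl, mul_zero]
  · rw [hred _ (fun t => ne_zero_sub hκ t), integral_gminus hr hκ n (n+2) le_rfl]
    rw [show m + 1 + n - m - 1 = n by omega, show m + 1 + n - m + 1 = n + 2 by omega]
    have h2π : ((2 * π : ℝ) : ℂ) ≠ 0 := by
      exact_mod_cast Complex.ofReal_ne_zero.mpr (by positivity)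
    rw [div_mul_eq_mul_div, one_mul, div_eq_iff (by push_cast at h2π ⊢; exact h2π),
      show ((2:ℂ) * (π:ℝ)) = ((2*π:ℝ):ℂ) by push_cast; ring, ← Complex.ofReal_mul]
    congr 1
    field_simp
end

section
/- For every real r > 0 and all natural numbers l, m: (1/(2π))·∫_{ℝ} 2r·(r−it)^l·(r+it)^m / ( (r+it)^{l+1}·(r−it)^{m+1} ) dt = 1 if l = m, and = 0 if l ≠ m. -/
open MeasureTheory Real Complex

open Filter Topology


lemma integrable_aux (r : ℝ) (hr : 0 < r) : Integrable (fun t : ℝ => (r^2 + t^2)⁻¹) := by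
  refine (integrable_inv_one_add_sq.const_mul (min (r^2) 1)⁻¹).mono' ?_ ?_
  · exact (Continuous.inv₀ (by continuity) (fun t => by positivity)).aestronglyMeasurable
  · refine Filter.Eventually.of_forall fun t => ?_
    rw [Real.norm_of_nonneg (by positivity), ← mul_inv]
    refine inv_anti₀ (by positivity) ?_
    have h1 := min_le_left (r^2) 1
    have h2 := min_le_right (r^2) 1
    nlinarith [sq_nonneg t]

lemma w_ne (r : ℝ) (hr : 0 < r) (t : ℝ) : (r:ℂ) - Complex.I*t ≠ 0 := by
  intro h
  have := congrArg Complex.re h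
  simp at this
  exact hr.ne' this

lemma z_ne (r : ℝ) (hr : 0 < r) (t : ℝ) : (r:ℂ) + Complex.I*t ≠ 0 := by
  intro h
  have := congrArg Complex.re h
  simp at this
  exact hr.ne' this

lemma norm_w_sq (r t : ℝ) : ‖(r:ℂ) - Complex.I*t‖^2 = r^2 + t^2 := by
  simp [Complex.sq_norm, Complex.normSq_apply]
  ring

lemma norm_z_eq (r t : ℝ) : ‖(r:ℂ) + Complex.I*t‖ = ‖(r:ℂ) - Complex.I*t‖ := by
  simp only [Complex.norm_def, Complex.normSq_apply]
  norm_num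

lemma cont_z (r : ℝ) : Continuous (fun t : ℝ => (r:ℂ) + Complex.I*t) :=
  continuous_const.add (continuous_const.mul Complex.continuous_ofReal)

lemma cont_w (r : ℝ) : Continuous (fun t : ℝ => (r:ℂ) - Complex.I*t) :=
  continuous_const.sub (continuous_const.mul Complex.continuous_ofReal)

lemma key (r : ℝ) (hr : 0 < r) (j : ℕ) :
    ∫ t : ℝ, ((r:ℂ) + Complex.I*t)^j / ((r:ℂ) - Complex.I*t)^(j+2) = 0 := by
  have hj : ((j:ℂ)+1) ≠ 0 := by
    have h := Nat.cast_ne_zero (R := ℂ) |>.mpr (Nat.succ_ne_zero j)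
    push_cast at h; exact h
  have hrne : (r:ℂ) ≠ 0 := Complex.ofReal_ne_zero.mpr hr.ne'
  set c : ℂ := (2*Complex.I*((j:ℂ)+1)*r)⁻¹ with hcdef
  have hcne : (2*Complex.I*((j:ℂ)+1)*(r:ℂ)) ≠ 0 := by
    simp [Complex.I_ne_zero, hj, hrne]
  have hderiv : ∀ t : ℝ, HasDerivAt
      (fun t : ℝ => ((r:ℂ) + Complex.I*t)^(j+1) / ((r:ℂ) - Complex.I*t)^(j+1) * c)
      (((r:ℂ) + Complex.I*t)^j / ((r:ℂ) - Complex.I*t)^(j+2)) t := by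
    intro t
    have hz' : HasDerivAt (fun s : ℂ => (r:ℂ) + Complex.I*s) Complex.I (t:ℂ) := by
      simpa using ((hasDerivAt_id (t:ℂ)).const_mul Complex.I).const_add (r:ℂ)
    have hw' : HasDerivAt (fun s : ℂ => (r:ℂ) - Complex.I*s) (-Complex.I) (t:ℂ) := by
      simpa using ((hasDerivAt_id (t:ℂ)).const_mul Complex.I).const_sub (r:ℂ)
    have hwne : ((r:ℂ) - Complex.I*(t:ℂ))^(j+1) ≠ 0 := pow_ne_zero _ (w_ne r hr t)
    have h := (((hz'.pow (j+1)).div (hw'.pow (j+1)) hwne).mul_const c).comp_ofReal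
    convert h using 1
    · rfl
    rw [hcdef, ← div_eq_mul_inv, div_div]
    simp only [Pi.pow_apply]
    rw [div_eq_div_iff (pow_ne_zero _ (w_ne r hr t))
      (mul_ne_zero (pow_ne_zero _ (pow_ne_zero _ (w_ne r hr t))) hcne)]
    simp only [Nat.add_sub_cancel]
    push_cast
    ring
  have hq : ∀ (l : Filter ℝ), Tendsto (fun t : ℝ => r/t) l (𝓝 0) →
      (∀ᶠ t in l, t ≠ 0) →
      Tendsto (fun t : ℝ => ((r:ℂ) + Complex.I*t) / ((r:ℂ) - Complex.I*t)) l (𝓝 (-1)) := by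
    intro l h0 hne
    have h0' : Tendsto (fun t : ℝ => ((r/t : ℝ) : ℂ)) l (𝓝 0) := by
      simpa [Function.comp_def] using (Complex.continuous_ofReal.tendsto 0).comp h0
    have hden : ((0:ℂ) - Complex.I) ≠ 0 := by
      rw [zero_sub, neg_ne_zero]; exact Complex.I_ne_zero
    have hmain : Tendsto (fun t : ℝ => (((r/t : ℝ):ℂ) + Complex.I) / (((r/t : ℝ):ℂ) - Complex.I))
        l (𝓝 (((0:ℂ) + Complex.I)/((0:ℂ) - Complex.I))) :=
      (h0'.add_const Complex.I).div (h0'.sub_const Complex.I) hden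
    have hval : ((0:ℂ) + Complex.I)/((0:ℂ) - Complex.I) = -1 := by
      rw [zero_add, zero_sub, div_neg, div_self Complex.I_ne_zero]
    rw [hval] at hmain
    refine hmain.congr' ?_
    filter_upwards [hne] with t ht
    have ht' : (t:ℂ) ≠ 0 := Complex.ofReal_ne_zero.mpr ht
    have hw := w_ne r hr t
    have hd1 : (((r/t : ℝ):ℂ) - Complex.I) ≠ 0 := by
      intro h
      have := congrArg Complex.im h
      simp at this
    rw [div_eq_div_iff hd1 hw]
    push_cast
    field_simp
    try ring
    try tauto
  have htop : Tendsto (fun t : ℝ => ((r:ℂ) + Complex.I*t) / ((r:ℂ) - Complex.I*t)) atTop (𝓝 (-1)) := by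
    refine hq atTop (tendsto_const_nhds.div_atTop tendsto_id) ?_
    filter_upwards [eventually_gt_atTop 0] with t ht using ht.ne'
  have hbot : Tendsto (fun t : ℝ => ((r:ℂ) + Complex.I*t) / ((r:ℂ) - Complex.I*t)) atBot (𝓝 (-1)) := by
    refine hq atBot ?_ ?_
    · have h := (Filter.Tendsto.div_atTop (f := fun _ : ℝ => r) (tendsto_const_nhds) tendsto_id).neg.comp
        tendsto_neg_atBot_atTop
      simpa [Function.comp_def, div_neg] using h
    · filter_upwards [eventually_lt_atBot 0] with t ht using ht.ne
  have hFtop : Tendsto (fun t : ℝ => ((r:ℂ) + Complex.I*t)^(j+1) / ((r:ℂ) - Complex.I*t)^(j+1) * c)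
      atTop (𝓝 ((-1:ℂ)^(j+1) * c)) := by
    have := (htop.pow (j+1)).mul_const c
    simpa [div_pow] using this
  have hFbot : Tendsto (fun t : ℝ => ((r:ℂ) + Complex.I*t)^(j+1) / ((r:ℂ) - Complex.I*t)^(j+1) * c)
      atBot (𝓝 ((-1:ℂ)^(j+1) * c)) := by
    have := (hbot.pow (j+1)).mul_const c
    simpa [div_pow] using this
  have hnorm : ∀ t : ℝ, ‖((r:ℂ) + Complex.I*t)^j / ((r:ℂ) - Complex.I*t)^(j+2)‖ = (r^2 + t^2)⁻¹ := by
    intro t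
    have hwpos : (0:ℝ) < ‖(r:ℂ) - Complex.I*t‖ := norm_pos_iff.mpr (w_ne r hr t)
    rw [norm_div, norm_pow, norm_pow, norm_z_eq r t, pow_add, ← norm_w_sq r t,
      inv_eq_one_div, div_eq_div_iff (mul_pos (pow_pos hwpos j) (pow_pos hwpos 2)).ne' (pow_pos hwpos 2).ne']
    ring
  have hint : Integrable (fun t : ℝ => ((r:ℂ) + Complex.I*t)^j / ((r:ℂ) - Complex.I*t)^(j+2)) := by
    refine (integrable_aux r hr).mono' ?_ ?_
    · exact (((cont_z r).pow j).div ((cont_w r).pow (j+2))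
        (fun t => pow_ne_zero _ (w_ne r hr t))).aestronglyMeasurable
    · exact Filter.Eventually.of_forall fun t => le_of_eq (hnorm t)
  have h1 := integral_Ioi_of_hasDerivAt_of_tendsto' (a := 0) (fun x _ => hderiv x)
    hint.integrableOn hFtop
  have h2 := integral_Iic_of_hasDerivAt_of_tendsto' (a := 0) (fun x _ => hderiv x)
    hint.integrableOn hFbot
  have h3 := intervalIntegral.integral_Iic_add_Ioi (b := (0:ℝ)) hint.integrableOn hint.integrableOn
  rw [← h3, h1, h2]
  ring

lemma real_integral (r : ℝ) (hr : 0 < r) : ∫ t : ℝ, 2*r*(r^2+t^2)⁻¹ = 2*Real.pi := by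
  have hint := (integrable_aux r hr).const_mul (2*r)
  have hderiv : ∀ t : ℝ, HasDerivAt (fun t : ℝ => 2 * Real.arctan (t/r)) (2*r*(r^2+t^2)⁻¹) t := by
    intro t
    have h := ((Real.hasDerivAt_arctan (t/r)).comp t ((hasDerivAt_id t).div_const r)).const_mul 2
    convert h using 1
    · rfl
    · rfl
    · rfl
    field_simp
  have htop : Tendsto (fun t : ℝ => 2 * Real.arctan (t/r)) atTop (𝓝 Real.pi) := by
    have h := ((tendsto_nhds_of_tendsto_nhdsWithin Real.tendsto_arctan_atTop).comp
      (Tendsto.atTop_div_const hr tendsto_id)).const_mul 2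
    have : 2 * (Real.pi/2) = Real.pi := by ring
    rw [this] at h
    simpa [Function.comp_def] using h
  have hbot : Tendsto (fun t : ℝ => 2 * Real.arctan (t/r)) atBot (𝓝 (-Real.pi)) := by
    have h := ((tendsto_nhds_of_tendsto_nhdsWithin Real.tendsto_arctan_atBot).comp
      (Tendsto.atBot_div_const hr tendsto_id)).const_mul 2
    have : 2 * (-(Real.pi/2)) = -Real.pi := by ring
    rw [this] at h
    simpa [Function.comp_def] using h
  have h1 := integral_Ioi_of_hasDerivAt_of_tendsto' (a := 0) (fun x _ => hderiv x)
    hint.integrableOn htop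
  have h2 := integral_Iic_of_hasDerivAt_of_tendsto' (a := 0) (fun x _ => hderiv x)
    hint.integrableOn hbot
  have h3 := intervalIntegral.integral_Iic_add_Ioi (b := (0:ℝ)) hint.integrableOn hint.integrableOn
  rw [← h3, h1, h2]
  simp [Real.arctan_zero]
  ring

lemma main_lt (r : ℝ) (hr : 0 < r) (l m : ℕ) (h : l < m) :
    ∫ t : ℝ, 2 * (r : ℂ) * ((r : ℂ) - Complex.I * t) ^ l * ((r : ℂ) + Complex.I * t) ^ m /
      (((r : ℂ) + Complex.I * t) ^ (l + 1) * ((r : ℂ) - Complex.I * t) ^ (m + 1)) = 0 := by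
  obtain ⟨j, rfl⟩ : ∃ j, m = l + (j+1) := ⟨m - l - 1, by omega⟩
  have heq : (fun t : ℝ => 2 * (r:ℂ) * ((r:ℂ) - Complex.I*t)^l * ((r:ℂ)+Complex.I*t)^(l+(j+1)) /
      (((r:ℂ)+Complex.I*t)^(l+1) * ((r:ℂ)-Complex.I*t)^(l+(j+1)+1))) =
      fun t : ℝ => 2*(r:ℂ) * (((r:ℂ)+Complex.I*t)^j / ((r:ℂ)-Complex.I*t)^(j+2)) := by
    funext t
    rw [mul_div_assoc']
    rw [div_eq_div_iff
      (mul_ne_zero (pow_ne_zero _ (z_ne r hr t)) (pow_ne_zero _ (w_ne r hr t)))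
      (pow_ne_zero _ (w_ne r hr t))]
    ring
  rw [heq, MeasureTheory.integral_const_mul, key r hr j, mul_zero]

/-- Orthonormality of the Fourier-transformed Laguerre functions in
`L²(ℝ, dt/2π)` (underlying formula (4.3) of the paper):
`(1/2π)∫_ℝ 2r(r−it)^l(r+it)^m/((r+it)^{l+1}(r−it)^{m+1}) dt = δ_{lm}`. -/
theorem laguerre_orthonormality (r : ℝ) (hr : 0 < r) (l m : ℕ) :
    (1 / (2 * Real.pi) : ℂ) *
        ∫ t : ℝ, 2 * (r : ℂ) * ((r : ℂ) - Complex.I * t) ^ l * ((r : ℂ) + Complex.I * t) ^ m /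
          (((r : ℂ) + Complex.I * t) ^ (l + 1) * ((r : ℂ) - Complex.I * t) ^ (m + 1)) =
      if l = m then 1 else 0 := by

  rcases lt_trichotomy l m with h | h | h
  · rw [main_lt r hr l m h, if_neg h.ne, mul_zero]
  · subst h
    rw [if_pos rfl]
    have hzw : ∀ t : ℝ, (((r:ℂ)+Complex.I*t) * ((r:ℂ)-Complex.I*t)) = (((r^2+t^2 : ℝ)):ℂ) := by
      intro t
      push_cast
      linear_combination (-(t:ℂ)^2) * Complex.I_sq
    have heq : (fun t : ℝ => 2 * (r:ℂ) * ((r:ℂ) - Complex.I*t)^l * ((r:ℂ)+Complex.I*t)^l /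
        (((r:ℂ)+Complex.I*t)^(l+1) * ((r:ℂ)-Complex.I*t)^(l+1))) =
        fun t : ℝ => ((2*r*(r^2+t^2)⁻¹ : ℝ) : ℂ) := by
      funext t
      have hs : ((r^2+t^2:ℝ)) ≠ 0 := by positivity
      have hsC : (((r^2+t^2:ℝ)):ℂ) ≠ 0 := Complex.ofReal_ne_zero.mpr hs
      have key1 : ((r:ℂ)-Complex.I*t)^l * ((r:ℂ)+Complex.I*t)^l = (((r^2+t^2:ℝ)):ℂ)^l := by
        rw [← mul_pow, mul_comm, hzw t]
      have key2 : ((r:ℂ)+Complex.I*t)^(l+1) * ((r:ℂ)-Complex.I*t)^(l+1)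
          = (((r^2+t^2:ℝ)):ℂ)^(l+1) := by
        rw [← mul_pow, hzw t]
      rw [mul_assoc (2*(r:ℂ)), key1, key2, Complex.ofReal_mul, Complex.ofReal_mul,
        Complex.ofReal_inv, Complex.ofReal_ofNat, div_eq_iff (pow_ne_zero _ hsC),
        pow_succ ((((r^2+t^2:ℝ)):ℂ)) l]
      field_simp
    have h4 : (∫ t : ℝ, ((2*r*(r^2+t^2)⁻¹ : ℝ) : ℂ)) =
        ((∫ t : ℝ, 2*r*(r^2+t^2)⁻¹ : ℝ) : ℂ) := integral_ofReal
    rw [heq, h4, real_integral r hr]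
    push_cast
    have : (Real.pi : ℂ) ≠ 0 := Complex.ofReal_ne_zero.mpr Real.pi_ne_zero
    field_simp
  · have hc : (fun t : ℝ => 2 * (r:ℂ) * ((r:ℂ) - Complex.I*t)^l * ((r:ℂ)+Complex.I*t)^m /
        (((r:ℂ)+Complex.I*t)^(l+1) * ((r:ℂ)-Complex.I*t)^(m+1))) =
        fun t : ℝ => (starRingEnd ℂ) (2 * (r:ℂ) * ((r:ℂ) - Complex.I*t)^m * ((r:ℂ)+Complex.I*t)^l /
        (((r:ℂ)+Complex.I*t)^(m+1) * ((r:ℂ)-Complex.I*t)^(l+1))) := by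
      funext t
      rw [map_div₀]
      simp only [map_mul, map_pow, map_sub, map_add, Complex.conj_ofReal, Complex.conj_I,
        map_ofNat]
      ring
    rw [hc, integral_conj, main_lt r hr m l h, map_zero, if_neg h.ne', mul_zero]
end

section
/- For every real r > 0, (1/(2π))·∫_{ℝ} (2r/(r^2+t^2))·log(r^2+t^2) dt = 2·log 2 + 2·log r. -/
open MeasureTheory Real Set intervalIntegral


-- Lemma 1
lemma log_eq_int (s : ℝ) :
    Real.log (1 + s ^ 2) = ∫ a in (0:ℝ)..1, s ^ 2 / (1 + a * s ^ 2) := by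
  have h : ∀ a ∈ Set.uIcc (0:ℝ) 1, HasDerivAt (fun a : ℝ => Real.log (1 + a * s ^ 2))
      (s ^ 2 / (1 + a * s ^ 2)) a := by
    intro a ha
    rw [Set.uIcc_of_le zero_le_one] at ha
    have hpos : 0 < 1 + a * s ^ 2 := by nlinarith [sq_nonneg s, ha.1]
    have h1 : HasDerivAt (fun a : ℝ => 1 + a * s ^ 2) (s ^ 2) a := by
      simpa using ((hasDerivAt_id a).mul_const (s ^ 2)).const_add 1
    simpa using h1.log hpos.ne'
  have hint : IntervalIntegrable (fun a : ℝ => s ^ 2 / (1 + a * s ^ 2)) volume 0 1 := by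
    apply ContinuousOn.intervalIntegrable
    apply ContinuousOn.div continuousOn_const
    · fun_prop
    · intro a ha
      rw [Set.uIcc_of_le zero_le_one] at ha
      nlinarith [sq_nonneg s, ha.1]
  have := intervalIntegral.integral_eq_sub_of_hasDerivAt h hint
  simp at this
  rw [this]


lemma integrable_inv_one_add_mul_sq {a : ℝ} (ha : 0 < a) :
    Integrable (fun x : ℝ => (1 + a * x ^ 2)⁻¹) := by
  have hs : Real.sqrt a ≠ 0 := (Real.sqrt_pos.2 ha).ne'
  have := integrable_inv_one_add_sq.comp_mul_left' hs
  refine this.congr (Filter.Eventually.of_forall fun x => ?_)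
  simp [mul_pow, Real.sq_sqrt ha.le]

lemma integral_inv_one_add_mul_sq {a : ℝ} (ha : 0 < a) :
    ∫ x : ℝ, (1 + a * x ^ 2)⁻¹ = π / Real.sqrt a := by
  have hs : 0 < Real.sqrt a := Real.sqrt_pos.2 ha
  have := MeasureTheory.Measure.integral_comp_mul_left
    (fun y : ℝ => (1 + y ^ 2)⁻¹) (Real.sqrt a)
  simp only [mul_pow, Real.sq_sqrt ha.le, integral_univ_inv_one_add_sq,
    smul_eq_mul, abs_of_pos (inv_pos.2 hs)] at this
  rw [this, inv_mul_eq_div]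

-- Lemma 2
lemma integral_inner_frac {a : ℝ} (ha : 0 < a) (ha1 : a < 1) :
    ∫ s : ℝ, s ^ 2 / ((1 + a * s ^ 2) * (1 + s ^ 2))
      = π / (Real.sqrt a * (1 + Real.sqrt a)) := by
  have hb : 0 < Real.sqrt a := Real.sqrt_pos.2 ha
  have hb1 : Real.sqrt a < 1 := by
    rw [show (1:ℝ) = Real.sqrt 1 by simp]
    exact Real.sqrt_lt_sqrt ha.le ha1
  have key : ∀ s : ℝ, s ^ 2 / ((1 + a * s ^ 2) * (1 + s ^ 2))
      = (1 - a)⁻¹ * ((1 + a * s ^ 2)⁻¹ - (1 + s ^ 2)⁻¹) := by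
    intro s
    have h1 : (0:ℝ) < 1 + a * s ^ 2 := by nlinarith [sq_nonneg s]
    have h2 : (0:ℝ) < 1 + s ^ 2 := by positivity
    have h3 : (1:ℝ) - a ≠ 0 := by linarith
    field_simp
    ring
  simp_rw [key]
  rw [MeasureTheory.integral_const_mul, integral_sub (integrable_inv_one_add_mul_sq ha)
    integrable_inv_one_add_sq, integral_inv_one_add_mul_sq ha,
    integral_univ_inv_one_add_sq]
  set b := Real.sqrt a with hbdef
  have hA : a = b * b := (Real.mul_self_sqrt ha.le).symm
  rw [hA]
  have h0 : b ≠ 0 := hb.ne'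
  have h2 : (1:ℝ) + b ≠ 0 := by linarith
  have h3 : (1:ℝ) - b ≠ 0 := by linarith
  have h4 : (1:ℝ) - b * b ≠ 0 := by nlinarith
  have h5 : (1:ℝ) - b ^ 2 ≠ 0 := by nlinarith
  field_simp
  ring


lemma intInt_outer : IntervalIntegrable
    (fun a : ℝ => π / (Real.sqrt a * (1 + Real.sqrt a))) volume 0 1 := by
  have hg : IntervalIntegrable (fun a : ℝ => π * a ^ (-(1:ℝ)/2)) volume 0 1 :=
    (intervalIntegral.intervalIntegrable_rpow' (by norm_num)).const_mul π
  refine hg.mono_fun ?_ ?_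
  · exact (measurable_const.div ((Real.continuous_sqrt.measurable).mul
      (measurable_const.add Real.continuous_sqrt.measurable))).aestronglyMeasurable
  · rw [Filter.EventuallyLE, ae_restrict_iff' measurableSet_uIoc]
    refine Filter.Eventually.of_forall fun a ha => ?_
    rw [Set.uIoc_of_le zero_le_one] at ha
    have h0 : 0 < Real.sqrt a := Real.sqrt_pos.2 ha.1
    have h1 : 0 < 1 + Real.sqrt a := by linarith
    have hr : a ^ (-(1:ℝ)/2) = (Real.sqrt a)⁻¹ := by
      rw [neg_div, Real.rpow_neg ha.1.le, Real.sqrt_eq_rpow]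
    rw [Real.norm_eq_abs, Real.norm_eq_abs, abs_of_nonneg (by positivity),
      abs_of_nonneg (mul_nonneg Real.pi_pos.le (Real.rpow_nonneg ha.1.le _)), hr]
    rw [div_le_iff₀ (by positivity)]
    rw [mul_comm π _, mul_assoc]
    have : (1:ℝ) ≤ (Real.sqrt a)⁻¹ * (Real.sqrt a * (1 + Real.sqrt a)) := by
      rw [inv_mul_eq_div, mul_comm, mul_div_assoc, div_self h0.ne']
      linarith
    nlinarith [Real.pi_pos]
  
lemma integral_outer : ∫ a in (0:ℝ)..1, π / (Real.sqrt a * (1 + Real.sqrt a))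
    = 2 * π * Real.log 2 := by
  have hcont : ContinuousOn (fun a : ℝ => 2 * π * Real.log (1 + Real.sqrt a)) (Icc 0 1) := by
    apply ContinuousOn.mul continuousOn_const
    apply ContinuousOn.log (by fun_prop)
    intro a ha
    have := Real.sqrt_nonneg a
    positivity
  have hderiv : ∀ a ∈ Ioo (0:ℝ) 1,
      HasDerivAt (fun a : ℝ => 2 * π * Real.log (1 + Real.sqrt a))
        (π / (Real.sqrt a * (1 + Real.sqrt a))) a := by
    intro a ha
    have h0 : 0 < Real.sqrt a := Real.sqrt_pos.2 ha.1
    have hs : HasDerivAt (fun a : ℝ => 1 + Real.sqrt a) (1 / (2 * Real.sqrt a)) a := by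
      simpa using (Real.hasDerivAt_sqrt ha.1.ne').const_add 1
    have hlog := hs.log (by positivity)
    have := hlog.const_mul (2 * π)
    refine this.congr_deriv ?_
    field_simp
  have := intervalIntegral.integral_eq_sub_of_hasDerivAt_of_le zero_le_one hcont hderiv intInt_outer
  rw [this, Real.sqrt_one, Real.sqrt_zero]
  norm_num


lemma integrable_log_kernel :
    Integrable (fun s : ℝ => Real.log (1 + s ^ 2) * (1 + s ^ 2)⁻¹) := by
  have hg : Integrable (fun s : ℝ => 4 * (1 + s ^ 2) ^ (-(3:ℝ)/4)) := by
    have := integrable_rpow_neg_one_add_norm_sq (E := ℝ) (μ := volume) (r := 3/2)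
      (by norm_num)
    refine (this.const_mul 4).congr (Filter.Eventually.of_forall fun x => ?_)
    norm_num [Real.norm_eq_abs, sq_abs]
  refine hg.mono' ?_ (Filter.Eventually.of_forall fun s => ?_)
  · exact ((Real.measurable_log.comp (measurable_const.add (measurable_id.pow_const 2))).mul
      ((measurable_const.add (measurable_id.pow_const 2)).inv)).aestronglyMeasurable
  · have hp : (0:ℝ) < 1 + s ^ 2 := by positivity
    have hlog : Real.log (1 + s ^ 2) ≤ 4 * (1 + s ^ 2) ^ ((1:ℝ)/4) := by
      have h := Real.log_le_rpow_div hp.le (by norm_num : (0:ℝ) < 1/4)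
      have h4 : (1 + s ^ 2) ^ ((1:ℝ)/4) / (1/4) = 4 * (1 + s ^ 2) ^ ((1:ℝ)/4) := by ring
      rwa [h4] at h
    rw [Real.norm_eq_abs, abs_of_nonneg (mul_nonneg (Real.log_nonneg (by nlinarith [sq_nonneg s]))
      (by positivity))]
    calc Real.log (1 + s ^ 2) * (1 + s ^ 2)⁻¹
        ≤ (4 * (1 + s ^ 2) ^ ((1:ℝ)/4)) * (1 + s ^ 2)⁻¹ :=
          mul_le_mul_of_nonneg_right hlog (by positivity)
      _ = 4 * (1 + s ^ 2) ^ (-(3:ℝ)/4) := by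
          rw [← Real.rpow_neg_one (1 + s ^ 2), mul_assoc, ← Real.rpow_add hp]
          norm_num

lemma slice_eq (s : ℝ) :
    ∫ a in Ioc (0:ℝ) 1, s ^ 2 / ((1 + a * s ^ 2) * (1 + s ^ 2))
      = Real.log (1 + s ^ 2) * (1 + s ^ 2)⁻¹ := by
  rw [← intervalIntegral.integral_of_le zero_le_one]
  have : ∀ a : ℝ, s ^ 2 / ((1 + a * s ^ 2) * (1 + s ^ 2))
      = s ^ 2 / (1 + a * s ^ 2) * (1 + s ^ 2)⁻¹ := fun a => by
    rw [div_mul_eq_div_div, div_eq_mul_inv _ (1 + s ^ 2)]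
  simp_rw [this]
  rw [intervalIntegral.integral_mul_const, ← log_eq_int]

lemma integrable_prod : Integrable
    (Function.uncurry fun (s a : ℝ) => s ^ 2 / ((1 + a * s ^ 2) * (1 + s ^ 2)))
    (volume.prod (volume.restrict (Ioc (0:ℝ) 1))) := by
  rw [integrable_prod_iff]
  · refine ⟨Filter.Eventually.of_forall fun s => ?_, ?_⟩
    · simp only [Function.uncurry_apply_pair]
      apply (ContinuousOn.integrableOn_Icc ?_).mono_set Ioc_subset_Icc_self
      apply ContinuousOn.div continuousOn_const (by fun_prop)
      intro a ha
      have h1 : (0:ℝ) < 1 + a * s ^ 2 := by nlinarith [sq_nonneg s, ha.1]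
      have h2 : (0:ℝ) < 1 + s ^ 2 := by positivity
      positivity
    · simp only [Function.uncurry_apply_pair]
      have heq : ∀ s : ℝ, (∫ a in Ioc (0:ℝ) 1, ‖s ^ 2 / ((1 + a * s ^ 2) * (1 + s ^ 2))‖)
          = Real.log (1 + s ^ 2) * (1 + s ^ 2)⁻¹ := by
        intro s
        rw [← slice_eq s]
        apply setIntegral_congr_fun measurableSet_Ioc
        intro a ha
        have h1 : (0:ℝ) < 1 + a * s ^ 2 := by nlinarith [sq_nonneg s, ha.1]
        have h2 : (0:ℝ) < 1 + s ^ 2 := by positivity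
        exact abs_of_nonneg (by positivity)
      simp_rw [heq]
      exact integrable_log_kernel
  · apply Measurable.aestronglyMeasurable
    apply Measurable.div
    · exact (measurable_fst.pow_const 2)
    · exact ((measurable_const.add (measurable_snd.mul (measurable_fst.pow_const 2))).mul
        (measurable_const.add (measurable_fst.pow_const 2)))

lemma integral_main : ∫ s : ℝ, Real.log (1 + s ^ 2) * (1 + s ^ 2)⁻¹ = 2 * π * Real.log 2 := by
  have swap := MeasureTheory.integral_integral_swap integrable_prod
  calc ∫ s : ℝ, Real.log (1 + s ^ 2) * (1 + s ^ 2)⁻¹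
      = ∫ s : ℝ, ∫ a in Ioc (0:ℝ) 1, s ^ 2 / ((1 + a * s ^ 2) * (1 + s ^ 2)) := by
        exact (congrArg _ (funext fun s => (slice_eq s).symm))
    _ = ∫ a in Ioc (0:ℝ) 1, ∫ s : ℝ, s ^ 2 / ((1 + a * s ^ 2) * (1 + s ^ 2)) := swap
    _ = ∫ a in Ioo (0:ℝ) 1, ∫ s : ℝ, s ^ 2 / ((1 + a * s ^ 2) * (1 + s ^ 2)) :=
        integral_Ioc_eq_integral_Ioo
    _ = ∫ a in Ioo (0:ℝ) 1, π / (Real.sqrt a * (1 + Real.sqrt a)) := by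
        apply setIntegral_congr_fun measurableSet_Ioo
        intro a ha
        exact integral_inner_frac ha.1 ha.2
    _ = ∫ a in Ioc (0:ℝ) 1, π / (Real.sqrt a * (1 + Real.sqrt a)) :=
        integral_Ioc_eq_integral_Ioo.symm
    _ = 2 * π * Real.log 2 := by
        rw [← intervalIntegral.integral_of_le zero_le_one]; exact integral_outer


/-- The computation in the proof of Lemma 4.7:
`(1/2π)∫_ℝ (2r/(r²+t²))·log(r²+t²) dt = 2 log 2 + 2 log r` for `r > 0`. -/
theorem integral_laguerre_log (r : ℝ) (hr : 0 < r) :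
    (1 / (2 * Real.pi)) *
        ∫ t : ℝ, (2 * r / (r ^ 2 + t ^ 2)) * Real.log (r ^ 2 + t ^ 2) =
      2 * Real.log 2 + 2 * Real.log r := by
  have hscale := MeasureTheory.Measure.integral_comp_mul_left
    (fun t : ℝ => (2 * r / (r ^ 2 + t ^ 2)) * Real.log (r ^ 2 + t ^ 2)) r
  simp only [smul_eq_mul, abs_of_pos (inv_pos.2 hr)] at hscale
  have hpt : ∀ x : ℝ, (2 * r / (r ^ 2 + (r * x) ^ 2)) * Real.log (r ^ 2 + (r * x) ^ 2)
      = (2 / r) * ((2 * Real.log r) * (1 + x ^ 2)⁻¹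
          + Real.log (1 + x ^ 2) * (1 + x ^ 2)⁻¹) := by
    intro x
    have h1 : (0:ℝ) < 1 + x ^ 2 := by positivity
    have hE : r ^ 2 + (r * x) ^ 2 = r ^ 2 * (1 + x ^ 2) := by ring
    rw [hE, Real.log_mul (by positivity) h1.ne', Real.log_pow]
    push_cast
    field_simp
  simp_rw [hpt] at hscale
  have hInt2 : Integrable (fun x : ℝ => (2 * Real.log r) * (1 + x ^ 2)⁻¹) :=
    integrable_inv_one_add_sq.const_mul _
  have hval : ∫ x : ℝ, (2 / r) * ((2 * Real.log r) * (1 + x ^ 2)⁻¹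
      + Real.log (1 + x ^ 2) * (1 + x ^ 2)⁻¹)
      = (2 / r) * ((2 * Real.log r) * π + 2 * π * Real.log 2) := by
    rw [MeasureTheory.integral_const_mul, MeasureTheory.integral_add hInt2 integrable_log_kernel,
      MeasureTheory.integral_const_mul, integral_univ_inv_one_add_sq, integral_main]
  rw [hval] at hscale
  have hI : ∫ t : ℝ, (2 * r / (r ^ 2 + t ^ 2)) * Real.log (r ^ 2 + t ^ 2)
      = 4 * π * Real.log r + 4 * π * Real.log 2 := by
    have := hscale.symm
    field_simp at this ⊢
    linarith [this]
  rw [hI]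
  have hpi : (π : ℝ) ≠ 0 := Real.pi_ne_zero
  field_simp
  ring
end

section
/- Let n ≥ 1 and N ≥ 1 be integers and ε ∈ (0, 1/2). Let f : ℝ^n → ℂ be integrable and assume that ξ ↦ |ξ|^{1−2ε}·f(ξ) is also integrable on ℝ^n. Then for every μ > 0: | ∫_{ℝ^n} f(ξ)·(|ξ|^2+μ^2)^{-N} dξ − μ^{-2N}·∫_{ℝ^n} f(ξ) dξ | ≤ N·μ^{-2N−1+2ε}·∫_{ℝ^n} |ξ|^{1−2ε}·|f(ξ)| dξ. -/
open MeasureTheory Real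


lemma stepA (a b : ℝ) (ha : 0 ≤ a) (hb : 0 ≤ b) :
    ∀ N : ℕ, (a + b) ^ (N + 1) - b ^ (N + 1) ≤ (N + 1) * a * (a + b) ^ N := by
  intro N
  induction N with
  | zero => simp
  | succ N ih =>
    have hpow : b ^ (N + 1) ≤ (a + b) ^ (N + 1) :=
      pow_le_pow_left₀ hb (by linarith) _
    have h2 : (a + b) * ((a + b) ^ (N + 1) - b ^ (N + 1))
        ≤ (a + b) * ((N + 1) * a * (a + b) ^ N) :=
      mul_le_mul_of_nonneg_left ih (by linarith)
    have h3 : a * b ^ (N + 1) ≤ a * (a + b) ^ (N + 1) :=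
      mul_le_mul_of_nonneg_left hpow ha
    have h1 : (a + b) ^ (N + 1 + 1) - b ^ (N + 1 + 1)
        = (a + b) * ((a + b) ^ (N + 1) - b ^ (N + 1)) + a * b ^ (N + 1) := by ring
    have h4 : (a + b) * ((N + 1 : ℕ) * a * (a + b) ^ N) + a * (a + b) ^ (N + 1)
        = ((N + 1 + 1 : ℕ) : ℝ) * a * (a + b) ^ (N + 1) := by push_cast; ring
    push_cast at *
    linarith

-- Step C : x^2/(x^2+μ^2) ≤ x^(1-2ε) * μ^(2ε-1)
lemma stepC (ε : ℝ) (hε : 0 < ε) (hε' : ε < 1 / 2) (μ : ℝ) (hμ : 0 < μ)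
    (x : ℝ) (hx : 0 ≤ x) :
    x ^ 2 / (x ^ 2 + μ ^ 2) ≤ x ^ (1 - 2 * ε) * μ ^ (2 * ε - 1) := by
  have hs : (0:ℝ) < 1 - 2 * ε := by linarith
  have hd : (0:ℝ) < x ^ 2 + μ ^ 2 := by positivity
  have key : x ^ 2 / (x ^ 2 + μ ^ 2) ≤ (x / μ) ^ (1 - 2 * ε) := by
    rcases eq_or_lt_of_le hx with h0 | hx0
    · rw [← h0]
      simp [Real.zero_rpow hs.ne']
    rcases le_or_gt x μ with hle | hgt
    · have h1 : x ^ 2 / (x ^ 2 + μ ^ 2) ≤ (x / μ) ^ (2:ℕ) := by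
        rw [div_pow]
        apply div_le_div_of_nonneg_left (by positivity) (by positivity)
        nlinarith
      have h2 : (x / μ) ^ ((2:ℝ)) ≤ (x / μ) ^ (1 - 2 * ε) :=
        Real.rpow_le_rpow_of_exponent_ge (by positivity) (div_le_one_of_le₀ hle hμ.le)
          (by linarith)
      calc x ^ 2 / (x ^ 2 + μ ^ 2) ≤ (x / μ) ^ (2:ℕ) := h1
        _ = (x / μ) ^ ((2:ℝ)) := by
            rw [← Real.rpow_natCast (x/μ) 2]; norm_num
        _ ≤ _ := h2
    · have h1 : x ^ 2 / (x ^ 2 + μ ^ 2) ≤ 1 := by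
        rw [div_le_one hd]; nlinarith
      have h2 : (1:ℝ) ≤ (x / μ) ^ (1 - 2 * ε) :=
        Real.one_le_rpow ((one_le_div hμ).mpr hgt.le) hs.le
      linarith
  calc x ^ 2 / (x ^ 2 + μ ^ 2) ≤ (x / μ) ^ (1 - 2 * ε) := key
    _ = x ^ (1 - 2 * ε) * μ ^ (2 * ε - 1) := by
        rw [Real.div_rpow hx hμ.le, div_eq_mul_inv, ← Real.rpow_neg hμ.le]
        norm_num

-- pointwise key lemma
lemma keylem (N : ℕ) (hN : 1 ≤ N) (ε : ℝ) (hε : 0 < ε) (hε' : ε < 1 / 2)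
    (μ : ℝ) (hμ : 0 < μ) (x : ℝ) (hx : 0 ≤ x) :
    |((x ^ 2 + μ ^ 2) ^ N)⁻¹ - μ ^ (-2 * (N : ℝ))| ≤
      N * μ ^ (-2 * (N : ℝ) - 1 + 2 * ε) * x ^ (1 - 2 * ε) := by
  have hd : (0:ℝ) < x ^ 2 + μ ^ 2 := by positivity
  have hdN : (0:ℝ) < (x ^ 2 + μ ^ 2) ^ N := by positivity
  have hμ2N : (0:ℝ) < (μ ^ 2) ^ N := by positivity
  -- rewrite rpow as nat pow
  have hr1 : μ ^ (-2 * (N : ℝ)) = ((μ ^ 2) ^ N)⁻¹ := by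
    rw [show (-2 * (N:ℝ)) = -(2 * N) by ring, Real.rpow_neg hμ.le,
      show ((2:ℝ) * N) = ((2 * N : ℕ) : ℝ) by push_cast; ring,
      Real.rpow_natCast, pow_mul]
  have hr2 : μ ^ (-2 * (N : ℝ) - 1 + 2 * ε) = ((μ ^ 2) ^ N)⁻¹ * μ ^ (2 * ε - 1) := by
    rw [show (-2 * (N:ℝ) - 1 + 2 * ε) = (-2 * N) + (2 * ε - 1) by ring,
      Real.rpow_add hμ, hr1]
  rw [hr1, hr2]
  -- the quantity is nonnegative: (x²+μ²)^N ≥ (μ²)^N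
  have hmono : (μ ^ 2) ^ N ≤ (x ^ 2 + μ ^ 2) ^ N :=
    pow_le_pow_left₀ (by positivity) (by nlinarith) _
  have habs : |((x ^ 2 + μ ^ 2) ^ N)⁻¹ - ((μ ^ 2) ^ N)⁻¹|
      = ((μ ^ 2) ^ N)⁻¹ - ((x ^ 2 + μ ^ 2) ^ N)⁻¹ := by
    rw [abs_sub_comm, abs_of_nonneg]
    have := inv_anti₀ hμ2N hmono
    linarith
  rw [habs]
  -- main estimate
  obtain ⟨M, rfl⟩ : ∃ M, N = M + 1 := ⟨N - 1, (Nat.succ_pred_eq_of_pos hN).symm⟩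
  have hA := stepA (x ^ 2) (μ ^ 2) (by positivity) (by positivity) M
  -- 1/(μ²)^N - 1/(x²+μ²)^N = ((x²+μ²)^N - (μ²)^N)/((μ²)^N (x²+μ²)^N)
  have heq : ((μ ^ 2) ^ (M+1))⁻¹ - ((x ^ 2 + μ ^ 2) ^ (M+1))⁻¹
      = ((x ^ 2 + μ ^ 2) ^ (M+1) - (μ ^ 2) ^ (M+1)) / ((μ ^ 2) ^ (M+1) * (x ^ 2 + μ ^ 2) ^ (M+1)) := by
    field_simp
  have hC := stepC ε hε hε' μ hμ x hx
  have hxd : x ^ 2 / (x ^ 2 + μ ^ 2) ≤ x ^ (1 - 2 * ε) * μ ^ (2 * ε - 1) := hC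
  have h2 : ((x ^ 2 + μ ^ 2) ^ (M+1) - (μ ^ 2) ^ (M+1)) / ((μ ^ 2) ^ (M+1) * (x ^ 2 + μ ^ 2) ^ (M+1))
      ≤ ((M+1) * (x^2) * (x^2+μ^2)^M) / ((μ ^ 2) ^ (M+1) * (x ^ 2 + μ ^ 2) ^ (M+1)) := by
    apply div_le_div_of_nonneg_right hA -- probably wrong name
    positivity
  have h3 : ((M+1:ℝ) * (x^2) * (x^2+μ^2)^M) / ((μ ^ 2) ^ (M+1) * (x ^ 2 + μ ^ 2) ^ (M+1))
      = (M+1) * ((μ ^ 2) ^ (M+1))⁻¹ * (x^2 / (x^2+μ^2)) := by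
    rw [pow_succ (x^2+μ^2)]
    field_simp
  have h4 : ((M+1:ℝ)) * ((μ ^ 2) ^ (M+1))⁻¹ * (x^2 / (x^2+μ^2))
      ≤ (M+1) * ((μ ^ 2) ^ (M+1))⁻¹ * (x ^ (1 - 2 * ε) * μ ^ (2 * ε - 1)) := by
    apply mul_le_mul_of_nonneg_left hxd (by positivity)
  calc ((μ ^ 2) ^ (M+1))⁻¹ - ((x ^ 2 + μ ^ 2) ^ (M+1))⁻¹
      ≤ ((M+1) * (x^2) * (x^2+μ^2)^M) / ((μ ^ 2) ^ (M+1) * (x ^ 2 + μ ^ 2) ^ (M+1)) := by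
        rw [heq]; exact h2
    _ = (M+1) * ((μ ^ 2) ^ (M+1))⁻¹ * (x^2 / (x^2+μ^2)) := h3
    _ ≤ (M+1) * ((μ ^ 2) ^ (M+1))⁻¹ * (x ^ (1 - 2 * ε) * μ ^ (2 * ε - 1)) := h4
    _ = ((M+1:ℕ):ℝ) * (((μ ^ 2) ^ (M+1))⁻¹ * μ ^ (2 * ε - 1)) * x ^ (1 - 2 * ε) := by
        push_cast; ring

/-- Quantitative remainder estimate behind formulas (3.9)–(3.10) and (4.15):
for integrable `f` with `|ξ|^{1−2ε} f(ξ)` integrable, and `μ > 0`,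
`|∫ f(ξ)(|ξ|²+μ²)^{-N} dξ − μ^{-2N}∫ f dξ| ≤ N μ^{-2N-1+2ε} ∫ |ξ|^{1-2ε}|f(ξ)| dξ`. -/
theorem resolvent_integral_remainder_estimate
    (n N : ℕ) (hn : 1 ≤ n) (hN : 1 ≤ N) (ε : ℝ) (hε : 0 < ε) (hε' : ε < 1 / 2)
    (f : EuclideanSpace ℝ (Fin n) → ℂ) (hf : Integrable f)
    (hf' : Integrable (fun ξ : EuclideanSpace ℝ (Fin n) =>
      (‖ξ‖ ^ (1 - 2 * ε) : ℝ) • f ξ))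
    (μ : ℝ) (hμ : 0 < μ) :
    ‖(∫ ξ : EuclideanSpace ℝ (Fin n), f ξ / ((‖ξ‖ ^ 2 + μ ^ 2 : ℝ) : ℂ) ^ N) -
        ((μ ^ (-2 * (N : ℝ)) : ℝ) : ℂ) * ∫ ξ : EuclideanSpace ℝ (Fin n), f ξ‖ ≤
      N * μ ^ (-2 * (N : ℝ) - 1 + 2 * ε) *
        ∫ ξ : EuclideanSpace ℝ (Fin n), ‖ξ‖ ^ (1 - 2 * ε) * ‖f ξ‖ := by
  set c : ℝ := μ ^ (-2 * (N : ℝ)) with hc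
  set K : ℝ := N * μ ^ (-2 * (N : ℝ) - 1 + 2 * ε) with hK
  have hd : ∀ ξ : EuclideanSpace ℝ (Fin n), (0:ℝ) < ‖ξ‖ ^ 2 + μ ^ 2 := fun ξ => by positivity
  have hcont : Continuous fun ξ : EuclideanSpace ℝ (Fin n) =>
      (((‖ξ‖ ^ 2 + μ ^ 2 : ℝ) : ℂ) ^ N)⁻¹ := by
    apply Continuous.inv₀
    · exact (Complex.continuous_ofReal.comp
        (((continuous_norm).pow 2).add continuous_const)).pow N
    · intro ξ
      exact pow_ne_zero _ (by exact_mod_cast (hd ξ).ne')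
  have hbdd : ∀ ξ : EuclideanSpace ℝ (Fin n),
      ‖(((‖ξ‖ ^ 2 + μ ^ 2 : ℝ) : ℂ) ^ N)⁻¹‖ ≤ ((μ ^ 2) ^ N)⁻¹ := by
    intro ξ
    have h1 : (((‖ξ‖ ^ 2 + μ ^ 2 : ℝ) : ℂ) ^ N)⁻¹
        = (((((‖ξ‖ ^ 2 + μ ^ 2 : ℝ)) ^ N)⁻¹ : ℝ) : ℂ) := by push_cast; ring
    rw [h1, Complex.norm_real, Real.norm_eq_abs, abs_of_nonneg (by positivity)]
    apply inv_anti₀ (by positivity)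
    exact pow_le_pow_left₀ (by positivity) (by nlinarith [sq_nonneg ‖ξ‖]) _
  have hm : Integrable fun ξ : EuclideanSpace ℝ (Fin n) =>
      f ξ / ((‖ξ‖ ^ 2 + μ ^ 2 : ℝ) : ℂ) ^ N := by
    have := hf.bdd_mul hcont.aestronglyMeasurable (c := ((μ ^ 2) ^ N)⁻¹) (Filter.Eventually.of_forall hbdd)
    exact this.congr (Filter.Eventually.of_forall fun ξ => by
      simp [div_eq_inv_mul])
  have hpt : ∀ ξ : EuclideanSpace ℝ (Fin n),
      ‖f ξ / ((‖ξ‖ ^ 2 + μ ^ 2 : ℝ) : ℂ) ^ N - (c : ℂ) * f ξ‖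
      ≤ K * (‖ξ‖ ^ (1 - 2 * ε) * ‖f ξ‖) := by
    intro ξ
    have heq : f ξ / ((‖ξ‖ ^ 2 + μ ^ 2 : ℝ) : ℂ) ^ N - (c : ℂ) * f ξ
        = ((((((‖ξ‖ ^ 2 + μ ^ 2 : ℝ)) ^ N)⁻¹ - c : ℝ)) : ℂ) * f ξ := by
      push_cast
      rw [div_eq_inv_mul]
      ring
    rw [heq, norm_mul, Complex.norm_real, Real.norm_eq_abs]
    have hkey := keylem N hN ε hε hε' μ hμ ‖ξ‖ (norm_nonneg ξ)
    calc |((‖ξ‖ ^ 2 + μ ^ 2) ^ N)⁻¹ - c| * ‖f ξ‖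
        ≤ (K * ‖ξ‖ ^ (1 - 2 * ε)) * ‖f ξ‖ :=
          mul_le_mul_of_nonneg_right hkey (norm_nonneg _)
      _ = K * (‖ξ‖ ^ (1 - 2 * ε) * ‖f ξ‖) := by ring
  have hb : Integrable fun ξ : EuclideanSpace ℝ (Fin n) =>
      K * (‖ξ‖ ^ (1 - 2 * ε) * ‖f ξ‖) := by
    apply Integrable.const_mul
    exact hf'.norm.congr (Filter.Eventually.of_forall fun ξ => by
      simp only [norm_smul, Real.norm_eq_abs]
      rw [abs_of_nonneg (Real.rpow_nonneg (norm_nonneg ξ) _)])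
  rw [show ((c : ℂ)) * ∫ ξ : EuclideanSpace ℝ (Fin n), f ξ
      = ∫ ξ : EuclideanSpace ℝ (Fin n), (c : ℂ) * f ξ from
    (integral_const_mul _ _).symm,
    ← integral_sub hm (hf.const_mul _)]
  calc ‖∫ ξ : EuclideanSpace ℝ (Fin n),
        (f ξ / ((‖ξ‖ ^ 2 + μ ^ 2 : ℝ) : ℂ) ^ N - (c : ℂ) * f ξ)‖
      ≤ ∫ ξ : EuclideanSpace ℝ (Fin n), K * (‖ξ‖ ^ (1 - 2 * ε) * ‖f ξ‖) :=
        norm_integral_le_of_norm_le hb (Filter.Eventually.of_forall hpt)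
    _ = K * ∫ ξ : EuclideanSpace ℝ (Fin n), ‖ξ‖ ^ (1 - 2 * ε) * ‖f ξ‖ :=
        integral_const_mul _ _
end

section
/- For every real μ > 0, setting κ(r) = √(r^2+μ^2): ∫_{1}^{∞} ∫_{ℝ} 1/( (r^2+t^2)·(κ(r)^2+t^2) ) dt dr = π·μ^{-2}·( log(√(1+μ^2)+1) − log 2 ). -/
open MeasureTheory Real

lemma integrable_inv_sq_add {a : ℝ} (ha : 0 < a) :
    Integrable (fun t : ℝ => 1 / (a ^ 2 + t ^ 2)) := by
  have h : (fun t : ℝ => 1 / (a ^ 2 + t ^ 2))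
      = fun t : ℝ => a⁻¹ ^ 2 * (1 + (a⁻¹ * t) ^ 2)⁻¹ := by
    funext t
    field_simp
    all_goals ring
  rw [h]
  exact (integrable_inv_one_add_sq.comp_mul_left' (inv_ne_zero ha.ne')).const_mul _

lemma integral_inv_sq_add {a : ℝ} (ha : 0 < a) :
    ∫ t : ℝ, 1 / (a ^ 2 + t ^ 2) = Real.pi / a := by
  have h : (fun t : ℝ => 1 / (a ^ 2 + t ^ 2))
      = fun t : ℝ => a⁻¹ ^ 2 * (1 + (a⁻¹ * t) ^ 2)⁻¹ := by
    funext t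
    field_simp
  rw [h, integral_const_mul, Measure.integral_comp_mul_left (fun y => (1 + y ^ 2)⁻¹) a⁻¹,
    integral_univ_inv_one_add_sq, inv_inv, abs_of_pos ha, smul_eq_mul]
  field_simp

lemma inner_integral (μ : ℝ) (hμ : 0 < μ) {r : ℝ} (hr : 0 < r) :
    ∫ t : ℝ, 1 / ((r ^ 2 + t ^ 2) * ((Real.sqrt (r ^ 2 + μ ^ 2)) ^ 2 + t ^ 2))
      = Real.pi * μ ^ (-2 : ℤ) * (1 / r - 1 / Real.sqrt (r ^ 2 + μ ^ 2)) := by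
  set κ := Real.sqrt (r ^ 2 + μ ^ 2) with hκdef
  have hκpos : 0 < κ := Real.sqrt_pos.2 (by positivity)
  have hκsq : κ ^ 2 = r ^ 2 + μ ^ 2 := Real.sq_sqrt (by positivity)
  have heq : (fun t : ℝ => 1 / ((r ^ 2 + t ^ 2) * (κ ^ 2 + t ^ 2)))
      = fun t : ℝ => μ⁻¹ ^ 2 * (1 / (r ^ 2 + t ^ 2) - 1 / (κ ^ 2 + t ^ 2)) := by
    funext t
    have h1 : (0:ℝ) < r ^ 2 + t ^ 2 := by positivity
    have h2 : (0:ℝ) < κ ^ 2 + t ^ 2 := by positivity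
    rw [hκsq] at h2 ⊢
    field_simp
    all_goals ring
  rw [heq, integral_const_mul,
    integral_sub (integrable_inv_sq_add hr) (integrable_inv_sq_add hκpos),
    integral_inv_sq_add hr, integral_inv_sq_add hκpos]
  have : (μ:ℝ) ^ (-2 : ℤ) = μ⁻¹ ^ 2 := by
    rw [zpow_neg, inv_pow]
    norm_cast
  rw [this]
  field_simp

/-- Combination of (4.28), (A.2) with `l = m`, and (A.4): for `μ > 0` and
`κ(r) = √(r²+μ²)`,
`∫_1^∞ ∫_ℝ dt dr/((r²+t²)(κ(r)²+t²)) = π μ⁻² (log(√(1+μ²)+1) − log 2)`. -/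
theorem iterated_integral_diag_laguerre (μ : ℝ) (hμ : 0 < μ) :
    ∫ r in Set.Ioi (1 : ℝ), ∫ t : ℝ,
        1 / ((r ^ 2 + t ^ 2) * ((Real.sqrt (r ^ 2 + μ ^ 2)) ^ 2 + t ^ 2)) =
      Real.pi * μ ^ (-2 : ℤ) * (Real.log (Real.sqrt (1 + μ ^ 2) + 1) - Real.log 2) := by
  have hcongr : ∫ r in Set.Ioi (1 : ℝ), ∫ t : ℝ,
        1 / ((r ^ 2 + t ^ 2) * ((Real.sqrt (r ^ 2 + μ ^ 2)) ^ 2 + t ^ 2))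
      = ∫ r in Set.Ioi (1 : ℝ),
          Real.pi * μ ^ (-2 : ℤ) * (1 / r - 1 / Real.sqrt (r ^ 2 + μ ^ 2)) := by
    apply setIntegral_congr_fun measurableSet_Ioi
    intro r hr
    exact inner_integral μ hμ (lt_trans one_pos hr)
  rw [hcongr]
  -- antiderivative
  set F : ℝ → ℝ := fun r => Real.pi * μ ^ (-2 : ℤ) * (Real.log r - Real.log (r + Real.sqrt (r ^ 2 + μ ^ 2))) with hF
  have hderiv : ∀ r ∈ Set.Ici (1:ℝ), HasDerivAt F
      (Real.pi * μ ^ (-2 : ℤ) * (1 / r - 1 / Real.sqrt (r ^ 2 + μ ^ 2))) r := by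
    intro r hr
    have hr0 : 0 < r := lt_of_lt_of_le one_pos hr
    have hκpos : 0 < Real.sqrt (r ^ 2 + μ ^ 2) := Real.sqrt_pos.2 (by positivity)
    have hκsq : Real.sqrt (r ^ 2 + μ ^ 2) ^ 2 = r ^ 2 + μ ^ 2 := Real.sq_sqrt (by positivity)
    have hsum : 0 < r + Real.sqrt (r ^ 2 + μ ^ 2) := by linarith
    have h1 : HasDerivAt (fun x : ℝ => x ^ 2 + μ ^ 2) (2 * r) r := by
      simpa using (hasDerivAt_pow 2 r).add_const (μ ^ 2)
    have h2 : HasDerivAt (fun x : ℝ => Real.sqrt (x ^ 2 + μ ^ 2))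
        (2 * r / (2 * Real.sqrt (r ^ 2 + μ ^ 2))) r := h1.sqrt (by positivity)
    have h3 : HasDerivAt (fun x : ℝ => x + Real.sqrt (x ^ 2 + μ ^ 2))
        (1 + 2 * r / (2 * Real.sqrt (r ^ 2 + μ ^ 2))) r := (hasDerivAt_id r).add h2
    have h4 : HasDerivAt (fun x : ℝ => Real.log (x + Real.sqrt (x ^ 2 + μ ^ 2)))
        ((1 + 2 * r / (2 * Real.sqrt (r ^ 2 + μ ^ 2))) / (r + Real.sqrt (r ^ 2 + μ ^ 2))) r :=
      h3.log hsum.ne'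
    have h5 : HasDerivAt (fun x : ℝ => Real.log x - Real.log (x + Real.sqrt (x ^ 2 + μ ^ 2)))
        (1 / r - (1 + 2 * r / (2 * Real.sqrt (r ^ 2 + μ ^ 2))) / (r + Real.sqrt (r ^ 2 + μ ^ 2))) r := by
      have h5' := (Real.hasDerivAt_log hr0.ne').sub h4
      rw [one_div]
      exact h5'
    have key : (1 + 2 * r / (2 * Real.sqrt (r ^ 2 + μ ^ 2))) / (r + Real.sqrt (r ^ 2 + μ ^ 2))
        = 1 / Real.sqrt (r ^ 2 + μ ^ 2) := by
      rw [div_eq_div_iff hsum.ne' hκpos.ne']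
      field_simp
      nlinarith [hκsq]
    rw [key] at h5
    exact h5.const_mul _
  have hnonneg : ∀ r ∈ Set.Ioi (1:ℝ),
      0 ≤ Real.pi * μ ^ (-2 : ℤ) * (1 / r - 1 / Real.sqrt (r ^ 2 + μ ^ 2)) := by
    intro r hr
    have hr0 : (0:ℝ) < r := lt_trans one_pos hr
    have hle : r ≤ Real.sqrt (r ^ 2 + μ ^ 2) := by
      rw [show r = Real.sqrt (r ^ 2) by rw [Real.sqrt_sq hr0.le]]
      · exact Real.sqrt_le_sqrt (by nlinarith [Real.sq_sqrt (show (0:ℝ) ≤ r^2 by positivity)])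
    have : 1 / Real.sqrt (r ^ 2 + μ ^ 2) ≤ 1 / r :=
      one_div_le_one_div_of_le hr0 hle
    have hc : (0:ℝ) ≤ Real.pi * μ ^ (-2 : ℤ) := by positivity
    nlinarith
  have htend : Filter.Tendsto F Filter.atTop
      (nhds (Real.pi * μ ^ (-2 : ℤ) * (- Real.log 2))) := by
    have heq : ∀ᶠ r in Filter.atTop, F r
        = Real.pi * μ ^ (-2 : ℤ) * (- Real.log (1 + Real.sqrt (1 + μ ^ 2 / r ^ 2))) := by
      filter_upwards [Filter.eventually_gt_atTop (0:ℝ)] with r hr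
      have hr2 : (0:ℝ) < r ^ 2 := by positivity
      have h1 : Real.sqrt (r ^ 2 + μ ^ 2) = r * Real.sqrt (1 + μ ^ 2 / r ^ 2) := by
        have he : r ^ 2 + μ ^ 2 = r ^ 2 * (1 + μ ^ 2 / r ^ 2) := by field_simp
        rw [he, Real.sqrt_mul (by positivity), Real.sqrt_sq hr.le]
      have hsq1 : (0:ℝ) < Real.sqrt (1 + μ ^ 2 / r ^ 2) := Real.sqrt_pos.2 (by positivity)
      have h2 : Real.log r - Real.log (r + Real.sqrt (r ^ 2 + μ ^ 2))
          = - Real.log (1 + Real.sqrt (1 + μ ^ 2 / r ^ 2)) := by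
        rw [h1, show r + r * Real.sqrt (1 + μ ^ 2 / r ^ 2)
            = r * (1 + Real.sqrt (1 + μ ^ 2 / r ^ 2)) by ring,
          Real.log_mul hr.ne' (by positivity)]
        ring
      simp only [hF, h2]
    have t1 : Filter.Tendsto (fun r : ℝ => μ ^ 2 / r ^ 2) Filter.atTop (nhds 0) :=
      Filter.Tendsto.div_atTop tendsto_const_nhds (Filter.tendsto_pow_atTop two_ne_zero)
    have t2 : Filter.Tendsto (fun r : ℝ => 1 + Real.sqrt (1 + μ ^ 2 / r ^ 2))
        Filter.atTop (nhds 2) := by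
      have h01 : Filter.Tendsto (fun r : ℝ => 1 + μ ^ 2 / r ^ 2) Filter.atTop (nhds 1) := by
        simpa using t1.const_add 1
      have hs : Filter.Tendsto (fun r : ℝ => Real.sqrt (1 + μ ^ 2 / r ^ 2))
          Filter.atTop (nhds 1) := by
        have := (Real.continuous_sqrt.tendsto 1).comp h01
        rw [Real.sqrt_one] at this
        exact this
      simpa [one_add_one_eq_two] using hs.const_add 1
    have t3 : Filter.Tendsto (fun r : ℝ => Real.log (1 + Real.sqrt (1 + μ ^ 2 / r ^ 2)))
        Filter.atTop (nhds (Real.log 2)) :=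
      (Real.continuousAt_log (by norm_num)).tendsto.comp t2
    have t4 := (t3.neg).const_mul (Real.pi * μ ^ (-2 : ℤ))
    rw [Filter.tendsto_congr' heq]
    simpa using t4
  have hcont : ContinuousWithinAt F (Set.Ici 1) 1 :=
    (hderiv 1 Set.self_mem_Ici).continuousAt.continuousWithinAt
  rw [integral_Ioi_of_hasDerivAt_of_nonneg hcont
    (fun x hx => hderiv x (Set.mem_Ici.mpr (le_of_lt hx))) hnonneg htend]
  simp only [hF, Real.log_one, one_pow]
  rw [show Real.sqrt (1 + μ ^ 2) + 1 = 1 + Real.sqrt (1 ^ 2 + μ ^ 2) by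
    rw [one_pow]; ring]
  ring
end
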